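/- arXiv:1612.09361 — 3 statements merged into one kernel-verified Lean document; each statement's English description precedes it below -/
import Mathlib

section
/- Let A₀ ∈ SL(2,ℝ) and for x ∈ ℝ/ℤ let R_x denote rotation by angle x. If k ≥ 4 is an integer and f(x) = kx mod 1, then there is no continuous map ξ : ℝ/ℤ → ℝP¹ satisfying ξ(f(x)) = A₀ R_x · ξ(x) for every x, where matrices act projectively. (Degree obstruction: such a ξ would have to satisfy k·deg(ξ) = deg(ξ) + 2.) -/
open Matrix MeasureTheory Set Filter Topology
open scoped ENNReal NNReal

noncomputable section

abbrev E2 := EuclideanSpace ℝ (Fin 2)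
abbrev SL2 := Matrix.SpecialLinearGroup (Fin 2) ℝ

/-- The real projective line, with the quotient topology. -/
abbrev RP1 := Projectivization ℝ E2

instance : TopologicalSpace RP1 :=
  inferInstanceAs (TopologicalSpace (Quotient (projectivizationSetoid ℝ E2)))
instance : MeasurableSpace RP1 := borel _
instance : BorelSpace RP1 := ⟨rfl⟩

/-- An element of `SL(2,ℝ)` as a continuous linear operator of Euclidean `ℝ²`. -/
def sl2CLM (A : SL2) : E2 →L[ℝ] E2 :=
  Matrix.toEuclideanCLM (𝕜 := ℝ) (A : Matrix (Fin 2) (Fin 2) ℝ)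

theorem sl2CLM_injective (A : SL2) : Function.Injective (sl2CLM A) := by
  intro v w hvw
  have h2 := congrArg (sl2CLM A⁻¹) hvw
  simp only [sl2CLM] at h2
  rw [← ContinuousLinearMap.comp_apply, ← ContinuousLinearMap.comp_apply,
    ← ContinuousLinearMap.mul_def, ← _root_.map_mul] at h2
  have h3 : ((A⁻¹ : SL2) : Matrix (Fin 2) (Fin 2) ℝ) * (A : Matrix (Fin 2) (Fin 2) ℝ) = 1 := by
    rw [← Matrix.SpecialLinearGroup.coe_mul, inv_mul_cancel, Matrix.SpecialLinearGroup.coe_one]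
  rw [h3] at h2
  simpa using h2

/-- Projective action of `SL(2,ℝ)` on the real projective line. -/
def projAction (A : SL2) : RP1 → RP1 :=
  Projectivization.map ((sl2CLM A) : E2 →ₗ[ℝ] E2) (sl2CLM_injective A)

/-- The rotation by angle `x` (i.e. by `2πx` radians), as an element of `SL(2,ℝ)`. -/
def RotSL (x : ℝ) : SL2 :=
  ⟨!![Real.cos (2 * Real.pi * x), -Real.sin (2 * Real.pi * x);
      Real.sin (2 * Real.pi * x),  Real.cos (2 * Real.pi * x)], by
    simp [Matrix.det_fin_two_of]
    nlinarith [Real.sin_sq_add_cos_sq (2 * Real.pi * x)]⟩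


section Aux
open Real


-- basic: ratio of close circle points is in slit plane
lemma re_pos_of_dist_lt_one {z w : Circle} (h : dist z w < 1) :
    0 < ((z / w : Circle) : ℂ).re := by
  have hw : ‖(w : ℂ)‖ = 1 := Circle.norm_coe w
  have hd : dist (z : ℂ) (w : ℂ) < 1 := h
  have h1 : ‖((z / w : Circle) : ℂ) - 1‖ < 1 := by
    rw [Circle.coe_div]
    have : (z : ℂ) / w - 1 = ((z : ℂ) - w) / w := by
      field_simp
    rw [this, norm_div, hw, div_one]
    rwa [dist_eq_norm] at hd
  have h2 : |(((z / w : Circle) : ℂ) - 1).re| ≤ ‖((z / w : Circle) : ℂ) - 1‖ :=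
    Complex.abs_re_le_norm _
  have := abs_lt.mp (lt_of_le_of_lt h2 h1)
  simp only [Complex.sub_re, Complex.one_re] at this
  linarith [this.1]

/-- Lifting lemma: a continuous map `ℝ → Circle` lifts on any compact interval. -/
lemma exists_lift (g : ℝ → Circle) (hg : Continuous g) (a b : ℝ) (hab : a ≤ b) :
    ∃ G : ℝ → ℝ, Continuous G ∧ ∀ x ∈ Icc a b, Circle.exp (G x) = g x := by
  -- uniform continuity on [a,b]
  obtain ⟨δ, hδ0, hδ⟩ : ∃ δ > 0, ∀ x ∈ Icc a b, ∀ y ∈ Icc a b, dist x y < δ →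
      dist (g x) (g y) < 1 := by
    have := (isCompact_Icc (a := a) (b := b)).uniformContinuousOn_of_continuous
      hg.continuousOn
    replace this := Metric.uniformContinuousOn_iff.mp this
    obtain ⟨δ, hδ0, H⟩ := this 1 one_pos
    exact ⟨δ, hδ0, H⟩
  set N : ℕ := ⌈(b - a) / δ⌉₊ + 1 with hN
  have hNpos : 0 < (N : ℝ) := by positivity
  set s : ℝ := (b - a) / N with hs
  have hs0 : 0 ≤ s := div_nonneg (by linarith) (le_of_lt hNpos)
  have hsδ : s < δ := by
    rw [hs, div_lt_iff₀ hNpos]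
    calc b - a ≤ ⌈(b - a) / δ⌉₊ * δ := by
          rw [← div_le_iff₀ hδ0]; exact Nat.le_ceil _
      _ < δ * N := by
          rw [hN]; push_cast; nlinarith
  set t : ℕ → ℝ := fun j => a + j * s with ht
  have htmem : ∀ j : ℕ, j ≤ N → t j ∈ Icc a b := by
    intro j hj
    constructor
    · simp [ht]; positivity
    · have : (j : ℝ) * s ≤ N * s := by
        apply mul_le_mul_of_nonneg_right _ hs0; exact_mod_cast hj
      have hNs : (N : ℝ) * s = b - a := by
        rw [hs]; field_simp
      simp only [ht]; linarith
  -- the key distance bound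
  have key : ∀ (x : ℝ) (j : ℕ), j + 1 ≤ N →
      dist (g (min x (t (j+1)))) (g (min x (t j))) < 1 := by
    intro x j hj
    rcases lt_or_ge x a with hx | hx
    · have h1 : min x (t j) = x := min_eq_left (le_of_lt (lt_of_lt_of_le hx (htmem j (by omega)).1))
      have h2 : min x (t (j+1)) = x := min_eq_left (le_of_lt (lt_of_lt_of_le hx (htmem (j+1) hj).1))
      rw [h1, h2, dist_self]; exact one_pos
    · have m1 : min x (t (j+1)) ∈ Icc a b := by
        constructor
        · exact le_min hx (htmem (j+1) hj).1
        · exact le_trans (min_le_right _ _) (htmem (j+1) hj).2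
      have m2 : min x (t j) ∈ Icc a b := by
        constructor
        · exact le_min hx (htmem j (by omega)).1
        · exact le_trans (min_le_right _ _) (htmem j (by omega)).2
      apply hδ _ m1 _ m2
      have hstep : t (j+1) - t j = s := by simp only [ht]; push_cast; ring
      have hmono : t j ≤ t (j+1) := by linarith
      have : |min x (t (j+1)) - min x (t j)| ≤ s := by
        rcases le_total x (t j) with h | h
        · rw [min_eq_left h, min_eq_left (h.trans hmono)]
          simpa using hs0
        · rw [min_eq_right h]
          rcases le_total x (t (j+1)) with h' | h'
          · rw [min_eq_left h', abs_of_nonneg (by linarith)]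
            linarith
          · rw [min_eq_right h', abs_of_nonneg (by linarith)]
            linarith
      rw [Real.dist_eq]
      linarith
  -- the lift
  set F : ℕ → ℝ → ℝ := fun j x =>
    Complex.arg ((g (min x (t (j+1))) / g (min x (t j)) : Circle) : ℂ) with hF
  refine ⟨fun x => Complex.arg (g a) + ∑ j ∈ Finset.range N, F j x, ?_, ?_⟩
  · apply continuous_const.add
    apply continuous_finset_sum
    intro j hj
    rw [Finset.mem_range] at hj
    rw [continuous_iff_continuousAt]
    intro x
    have hcirc : Continuous fun x => ((g (min x (t (j+1))) / g (min x (t j)) : Circle) : ℂ) :=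
      continuous_subtype_val.comp ((hg.comp (continuous_id.min continuous_const)).div'
        (hg.comp (continuous_id.min continuous_const)))
    apply (Complex.continuousAt_arg ?_).comp hcirc.continuousAt
    exact Complex.mem_slitPlane_iff.mpr (Or.inl (re_pos_of_dist_lt_one (key x j hj)))
  · intro x hx
    have expsum : Circle.exp (Complex.arg (g a) + ∑ j ∈ Finset.range N, F j x)
        = Circle.exp (Complex.arg (g a)) * ∏ j ∈ Finset.range N, Circle.exp (F j x) := by
      rw [Circle.exp_add]
      congr 1
      induction N with
      | zero => simp
      | succ n ih => rw [Finset.sum_range_succ, Finset.prod_range_succ, Circle.exp_add, ih]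
    rw [expsum]
    have hFj : ∀ j, Circle.exp (F j x) = g (min x (t (j+1))) / g (min x (t j)) := by
      intro j
      exact Circle.exp_arg _
    simp only [hFj]
    rw [Circle.exp_arg, Finset.prod_range_div (fun j => g (min x (t j)))]
    have ht0 : t 0 = a := by simp [ht]
    have htN : t N = b := by
      simp only [ht, hs]; field_simp; ring
    rw [ht0, htN, min_eq_right hx.1, min_eq_left hx.2]
    exact mul_div_cancel _ _



/-- A continuous function with values in `2πℤ` is constant on `[a,b]`. -/
lemma const_mult {f : ℝ → ℝ} (hf : Continuous f) {a b : ℝ}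
    (hz : ∀ x ∈ Icc a b, ∃ n : ℤ, f x = n * (2 * π)) :
    ∀ x ∈ Icc a b, f x = f a := by
  have key : ∀ x₁ x₂ : ℝ, x₁ ∈ Icc a b → x₂ ∈ Icc a b → x₁ ≤ x₂ →
      ∀ n₁ n₂ : ℤ, f x₁ = n₁ * (2*π) → f x₂ = n₂ * (2*π) → n₁ = n₂ := by
    intro x₁ x₂ hx₁ hx₂ h12 n₁ n₂ h1 h2
    by_contra hne
    set nm : ℤ := min n₁ n₂ with hnm
    set v : ℝ := nm * (2*π) + π with hv
    have hvmem : v ∈ uIcc (f x₁) (f x₂) := by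
      have hππ : 0 < π := pi_pos
      rcases le_or_gt n₁ n₂ with h | h
      · have hlt : n₁ < n₂ := lt_of_le_of_ne h hne
        have : (n₁ : ℝ) + 1 ≤ n₂ := by exact_mod_cast hlt
        rw [Set.mem_uIcc]
        left
        constructor
        · rw [h1, hv, hnm, min_eq_left h]; push_cast; linarith
        · rw [h2, hv, hnm, min_eq_left h]; push_cast; nlinarith
      · have : (n₂ : ℝ) + 1 ≤ n₁ := by exact_mod_cast h
        rw [Set.mem_uIcc]
        right
        constructor
        · rw [h2, hv, hnm, min_eq_right h.le]; push_cast; linarith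
        · rw [h1, hv, hnm, min_eq_right h.le]; push_cast; nlinarith
    obtain ⟨y, hy, hfy⟩ := intermediate_value_uIcc (hf.continuousOn (s := uIcc x₁ x₂)) hvmem
    rw [Set.uIcc_of_le h12] at hy
    have hymem : y ∈ Icc a b := ⟨le_trans hx₁.1 hy.1, le_trans hy.2 hx₂.2⟩
    obtain ⟨n, hn⟩ := hz y hymem
    rw [hn, hv] at hfy
    have hpi : π ≠ 0 := pi_ne_zero
    have : ((2*n - 2*nm - 1 : ℤ) : ℝ) * π = 0 := by push_cast; linarith
    have h0 : ((2*n - 2*nm - 1 : ℤ) : ℝ) = 0 := by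
      rcases mul_eq_zero.mp this with h | h
      · exact h
      · exact absurd h hpi
    have : (2*n - 2*nm - 1 : ℤ) = 0 := by exact_mod_cast h0
    omega
  intro x hx
  have ha : a ∈ Icc a b := ⟨le_refl a, le_trans hx.1 hx.2⟩
  obtain ⟨na, hna⟩ := hz a ha
  obtain ⟨nx, hnx⟩ := hz x hx
  have := key a x ha hx hx.1 na nx hna hnx
  rw [hna, hnx, this]

/-- Iterating the `+2π` increment relation. -/
lemma iterate_lift {H : ℝ → ℝ} {A B : ℝ} {m : ℤ}
    (hm : ∀ t ∈ Icc A B, H (t + 2*π) = H t + m * (2*π)) :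
    ∀ (n : ℤ) (t : ℝ), t ∈ Icc A B → t + n * (2*π) ∈ Icc A B →
      H (t + n * (2*π)) = H t + n * m * (2*π) := by
  have hπ : 0 < 2*π := by positivity
  have natcase : ∀ (n : ℕ) (t : ℝ), t ∈ Icc A B → t + n * (2*π) ∈ Icc A B →
      H (t + n * (2*π)) = H t + n * m * (2*π) := by
    intro n
    induction n with
    | zero => intro t ht _; simp
    | succ n ih =>
      intro t ht ht'
      have hmem : t + n * (2*π) ∈ Icc A B := by
        constructor
        · have : (0:ℝ) ≤ n * (2*π) := by positivity
          linarith [ht.1]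
        · have : (n:ℝ) * (2*π) ≤ (n+1) * (2*π) := by nlinarith
          have := ht'.2; push_cast at this ⊢; linarith
      have e1 : t + (n+1 : ℕ) * (2*π) = (t + n * (2*π)) + 2*π := by push_cast; ring
      rw [e1, hm _ hmem, ih t ht hmem]
      push_cast; ring
  intro n t ht ht'
  rcases le_or_gt 0 n with h | h
  · obtain ⟨nn, rfl⟩ := Int.eq_ofNat_of_zero_le h
    have := natcase nn t ht (by exact_mod_cast ht')
    push_cast at this ⊢; linarith
  · set nn : ℕ := (-n).toNat with hnn
    have hnncast : (nn : ℤ) = -n := Int.toNat_of_nonneg (by omega)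
    have heq : (t + n * (2*π)) + nn * (2*π) = t := by
      have : ((nn : ℤ) : ℝ) = -(n : ℝ) := by exact_mod_cast hnncast
      push_cast at this ⊢
      rw [this]; ring
    have := natcase nn (t + n * (2*π)) ht' (by rw [heq]; exact ht)
    rw [heq] at this
    have hc : ((nn : ℤ) : ℝ) = -(n : ℝ) := by exact_mod_cast hnncast
    have hc' : ((nn : ℕ) : ℝ) = -(n : ℝ) := by exact_mod_cast hnncast
    rw [hc'] at this
    linarith [this]



section Geom

/-- coordinates of `sl2CLM` -/
lemma sl2CLM_apply (A : SL2) (v : E2) (i : Fin 2) :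
    sl2CLM A v i = ∑ j, (A : Matrix (Fin 2) (Fin 2) ℝ) i j * v j := by
  have h := congrFun (Matrix.ofLp_toEuclideanCLM (𝕜 := ℝ)
    (A : Matrix (Fin 2) (Fin 2) ℝ) v) i
  simpa [Matrix.mulVec, dotProduct, sl2CLM] using h

/-- the complex number attached to a vector -/
def zc (v : E2) : ℂ := (v 0 : ℂ) + (v 1 : ℂ) * Complex.I

lemma zc_re (v : E2) : (zc v).re = v 0 := by simp [zc]
lemma zc_im (v : E2) : (zc v).im = v 1 := by simp [zc]

def dd (v : E2) : ℝ := v 0 ^ 2 + v 1 ^ 2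

lemma E2_eq_zero_iff (v : E2) : v = 0 ↔ v 0 = 0 ∧ v 1 = 0 := by
  constructor
  · intro h; rw [h]; exact ⟨rfl, rfl⟩
  · intro ⟨h0, h1⟩
    ext i
    fin_cases i
    · exact h0
    · exact h1

lemma dd_pos {v : E2} (hv : v ≠ 0) : 0 < dd v := by
  rcases (not_and_or.mp (fun h => hv ((E2_eq_zero_iff v).mpr h))) with h | h
  · have : 0 < v 0 ^ 2 := by positivity
    have : 0 ≤ v 1 ^ 2 := sq_nonneg _
    unfold dd; linarith
  · have : 0 < v 1 ^ 2 := by positivity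
    have : 0 ≤ v 0 ^ 2 := sq_nonneg _
    unfold dd; linarith

lemma sq_abs_zc (v : E2) : ‖zc v‖ ^ 2 = dd v := by
  rw [Complex.sq_norm, Complex.normSq_apply, zc_re, zc_im]
  unfold dd; ring

/-- the map to the circle on representatives -/
def phiRep (v : {v : E2 // v ≠ 0}) : Circle :=
  ⟨zc v.1 ^ 2 / ((dd v.1 : ℝ) : ℂ), by
    have hd := dd_pos v.2
    apply mem_sphere_zero_iff_norm.2
    have : ‖zc v.1 ^ 2 / ((dd v.1 : ℝ) : ℂ)‖ = ‖zc v.1‖ ^ 2 / |dd v.1| := by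
      rw [norm_div, norm_pow, Complex.norm_real, Real.norm_eq_abs]
    rw [this, sq_abs_zc, abs_of_pos hd, div_self (ne_of_gt hd)]⟩

lemma phiRep_welldef (a b : {v : E2 // v ≠ 0}) (t : ℝ) (h : (a : E2) = t • (b : E2)) :
    phiRep a = phiRep b := by
  have ht : t ≠ 0 := by
    intro h0
    apply a.2
    rw [h, h0, zero_smul]
  have ha0 : (a : E2) 0 = t * (b : E2) 0 := by rw [h]; rfl
  have ha1 : (a : E2) 1 = t * (b : E2) 1 := by rw [h]; rfl
  apply Subtype.ext
  show zc a.1 ^ 2 / ((dd a.1 : ℝ) : ℂ) = zc b.1 ^ 2 / ((dd b.1 : ℝ) : ℂ)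
  have hza : zc a.1 = (t : ℂ) * zc b.1 := by
    unfold zc; rw [ha0, ha1]; push_cast; ring
  have hda : dd a.1 = t ^ 2 * dd b.1 := by
    unfold dd; rw [ha0, ha1]; ring
  rw [hza, hda]
  have hdb : ((dd b.1 : ℝ) : ℂ) ≠ 0 := by
    exact_mod_cast ne_of_gt (dd_pos b.2)
  have htc : (t : ℂ) ≠ 0 := by exact_mod_cast ht
  push_cast
  field_simp

def Phi : RP1 → Circle := Projectivization.lift phiRep phiRep_welldef

lemma Phi_mk (v : E2) (hv : v ≠ 0) : Phi (Projectivization.mk ℝ v hv) = phiRep ⟨v, hv⟩ := rfl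

lemma Phi_continuous : Continuous Phi := by
  apply Continuous.quotient_lift
  apply Continuous.subtype_mk
  have happ : ∀ i : Fin 2, Continuous fun v : {v : E2 // v ≠ 0} => (v.1 i : ℂ) := fun i =>
    Complex.continuous_ofReal.comp ((PiLp.continuous_apply (p := 2) (β := fun _ : Fin 2 => ℝ) i).comp continuous_subtype_val)
  have hz : Continuous fun v : {v : E2 // v ≠ 0} => zc v.1 :=
    (happ 0).add ((happ 1).mul continuous_const)
  have hdd : Continuous fun v : {v : E2 // v ≠ 0} => ((dd v.1 : ℝ) : ℂ) := by
    apply Complex.continuous_ofReal.comp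
    exact (((PiLp.continuous_apply (p := 2) (β := fun _ : Fin 2 => ℝ) (0:Fin 2)).comp continuous_subtype_val).pow 2).add
      (((PiLp.continuous_apply (p := 2) (β := fun _ : Fin 2 => ℝ) (1:Fin 2)).comp continuous_subtype_val).pow 2)
  exact (hz.pow 2).div₀ hdd fun v => by exact_mod_cast ne_of_gt (dd_pos v.2)

lemma Phi_injective : Function.Injective Phi := by
  intro P Q
  induction P using Projectivization.ind with | h v hv =>
  induction Q using Projectivization.ind with | h w hw =>
  intro h
  rw [Phi_mk, Phi_mk] at h
  have h' : zc v ^ 2 / ((dd v : ℝ) : ℂ) = zc w ^ 2 / ((dd w : ℝ) : ℂ) := congrArg Subtype.val h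
  have hdv : ((dd v : ℝ) : ℂ) ≠ 0 := by exact_mod_cast ne_of_gt (dd_pos hv)
  have hdw : ((dd w : ℝ) : ℂ) ≠ 0 := by exact_mod_cast ne_of_gt (dd_pos hw)
  set c : ℝ := Real.sqrt (dd v / dd w) with hc
  have hc2 : c ^ 2 = dd v / dd w := Real.sq_sqrt (le_of_lt (div_pos (dd_pos hv) (dd_pos hw)))
  have hkey : (zc v - c * zc w) * (zc v + c * zc w) = 0 := by
    have e1 : zc v ^ 2 = ((c:ℂ) * zc w) ^ 2 := by
      rw [mul_pow]
      have : ((c:ℂ)) ^ 2 = ((dd v : ℝ) : ℂ) / ((dd w : ℝ) : ℂ) := by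
        have := congrArg (fun r : ℝ => (r : ℂ)) hc2
        push_cast at this
        rw [this]
      rw [this]
      rw [div_eq_div_iff hdv hdw] at h'
      field_simp
      linear_combination h'
    linear_combination e1
  have hsol : zc v = (c : ℂ) * zc w ∨ zc v = -((c:ℂ) * zc w) := by
    rcases mul_eq_zero.mp hkey with h | h
    · left; linear_combination h
    · right; linear_combination h
  have final : ∀ a : ℝ, zc v = (a : ℂ) * zc w → Projectivization.mk ℝ v hv = Projectivization.mk ℝ w hw := by
    intro a ha
    have h0 : v 0 = a * w 0 := by
      have := congrArg Complex.re ha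
      simpa [zc_re, Complex.mul_re, zc_im] using this
    have h1 : v 1 = a * w 1 := by
      have := congrArg Complex.im ha
      simpa [zc_im, Complex.mul_im, zc_re] using this
    rw [Projectivization.mk_eq_mk_iff']
    refine ⟨a, ?_⟩
    ext i
    fin_cases i
    · exact h0.symm
    · exact h1.symm
  rcases hsol with h | h
  · exact final c h
  · exact final (-c) (by push_cast; linear_combination h)

lemma Phi_surjective : Function.Surjective Phi := by
  intro z
  set θ : ℝ := Complex.arg z with hθ
  set u : E2 := (WithLp.equiv 2 (Fin 2 → ℝ)).symm ![Real.cos (θ/2), Real.sin (θ/2)] with hu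
  have hu0 : u 0 = Real.cos (θ/2) := rfl
  have hu1 : u 1 = Real.sin (θ/2) := rfl
  have hdu : dd u = 1 := by
    unfold dd; rw [hu0, hu1]
    nlinarith [Real.sin_sq_add_cos_sq (θ/2)]
  have hune : u ≠ 0 := by
    intro h
    obtain ⟨h0, h1⟩ := (E2_eq_zero_iff u).mp h
    rw [h0] at hu0; rw [h1] at hu1
    nlinarith [Real.sin_sq_add_cos_sq (θ/2)]
  refine ⟨Projectivization.mk ℝ u hune, ?_⟩
  rw [Phi_mk]
  apply Subtype.ext
  show zc u ^ 2 / ((dd u : ℝ) : ℂ) = (z : ℂ)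
  rw [hdu]
  have hzc : zc u = Complex.exp ((θ/2 : ℝ) * Complex.I) := by
    apply Complex.ext
    · rw [zc_re, hu0, Complex.exp_ofReal_mul_I_re]
    · rw [zc_im, hu1, Complex.exp_ofReal_mul_I_im]
  rw [hzc]
  have : Complex.exp ((θ/2 : ℝ) * Complex.I) ^ 2 = Complex.exp ((θ:ℝ) * Complex.I) := by
    rw [sq, ← Complex.exp_add]
    congr 1
    push_cast
    ring
  rw [this]
  have := Complex.norm_mul_exp_arg_mul_I (z : ℂ)
  rw [Circle.norm_coe] at this
  simpa using this

lemma sl2CLM_apply0 (A : SL2) (v : E2) :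
    sl2CLM A v 0 = (A : Matrix (Fin 2) (Fin 2) ℝ) 0 0 * v 0 + (A : Matrix (Fin 2) (Fin 2) ℝ) 0 1 * v 1 := by
  rw [sl2CLM_apply, Fin.sum_univ_two]

lemma sl2CLM_apply1 (A : SL2) (v : E2) :
    sl2CLM A v 1 = (A : Matrix (Fin 2) (Fin 2) ℝ) 1 0 * v 0 + (A : Matrix (Fin 2) (Fin 2) ℝ) 1 1 * v 1 := by
  rw [sl2CLM_apply, Fin.sum_univ_two]

lemma sl2CLM_mul (A B : SL2) (v : E2) : sl2CLM (A*B) v = sl2CLM A (sl2CLM B v) := by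
  unfold sl2CLM
  rw [Matrix.SpecialLinearGroup.coe_mul, _root_.map_mul]
  rfl

lemma projAction_mul (A B : SL2) (P : RP1) :
    projAction (A*B) P = projAction A (projAction B P) := by
  induction P using Projectivization.ind with | h v hv =>
  unfold projAction
  rw [Projectivization.map_mk, Projectivization.map_mk, Projectivization.map_mk]
  rw [Projectivization.mk_eq_mk_iff']
  exact ⟨1, by rw [one_smul]; exact (sl2CLM_mul A B v).symm⟩

lemma projAction_inv (A : SL2) (P : RP1) : projAction A (projAction A⁻¹ P) = P := by
  rw [← projAction_mul, mul_inv_cancel]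
  induction P using Projectivization.ind with | h v hv =>
  unfold projAction
  rw [Projectivization.map_mk, Projectivization.mk_eq_mk_iff']
  refine ⟨1, ?_⟩
  rw [one_smul]
  show v = sl2CLM 1 v
  unfold sl2CLM
  rw [Matrix.SpecialLinearGroup.coe_one, _root_.map_one]
  rfl

lemma projAction_continuous (A : SL2) : Continuous (projAction A) := by
  unfold projAction Projectivization.map
  apply Continuous.quotient_map'
  exact Continuous.subtype_mk ((sl2CLM A).continuous.comp continuous_subtype_val) _

/-- rotation acts on the circle as multiplication by `exp (4πx)` -/
lemma Phi_rot (x : ℝ) (P : RP1) :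
    Phi (projAction (RotSL x) P) = Circle.exp (4*π*x) * Phi P := by
  induction P using Projectivization.ind with | h v hv =>
  unfold projAction
  rw [Projectivization.map_mk, Phi_mk, Phi_mk]
  apply Subtype.ext
  rw [Circle.coe_mul, Circle.coe_exp]
  show zc (sl2CLM (RotSL x) v) ^ 2 / ((dd (sl2CLM (RotSL x) v) : ℝ) : ℂ)
      = _ * (zc v ^ 2 / ((dd v : ℝ) : ℂ))
  set α : ℝ := 2*π*x with hα
  have h0 : sl2CLM (RotSL x) v 0 = Real.cos α * v 0 - Real.sin α * v 1 := by
    rw [sl2CLM_apply0]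
    simp [RotSL]
    ring
  have h1 : sl2CLM (RotSL x) v 1 = Real.sin α * v 0 + Real.cos α * v 1 := by
    rw [sl2CLM_apply1]
    simp [RotSL]
    rfl
  have hz : zc (sl2CLM (RotSL x) v) = Complex.exp ((α:ℝ) * Complex.I) * zc v := by
    apply Complex.ext
    · rw [zc_re, h0, Complex.mul_re, Complex.exp_ofReal_mul_I_re, Complex.exp_ofReal_mul_I_im,
        zc_re, zc_im]
    · rw [zc_im, h1, Complex.mul_im, Complex.exp_ofReal_mul_I_re, Complex.exp_ofReal_mul_I_im,
        zc_re, zc_im]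
      ring
  have hd : dd (sl2CLM (RotSL x) v) = dd v := by
    unfold dd
    rw [h0, h1]
    nlinarith [Real.sin_sq_add_cos_sq α]
  rw [hz, hd, mul_pow]
  have hexp2 : Complex.exp ((α:ℝ) * Complex.I) ^ 2 = Complex.exp (((4*π*x : ℝ) : ℂ) * Complex.I) := by
    rw [sq, ← Complex.exp_add, hα]
    congr 1
    push_cast
    ring
  rw [hexp2]
  ring

/-- the covering of RP1 by angles -/
def sigm (θ : ℝ) : RP1 :=
  Projectivization.mk ℝ ((WithLp.equiv 2 (Fin 2 → ℝ)).symm ![Real.cos θ, Real.sin θ]) (by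
    intro h
    obtain ⟨h0, h1⟩ := (E2_eq_zero_iff _).mp h
    have e0 : ((WithLp.equiv 2 (Fin 2 → ℝ)).symm ![Real.cos θ, Real.sin θ] : E2) 0 = Real.cos θ := rfl
    have e1 : ((WithLp.equiv 2 (Fin 2 → ℝ)).symm ![Real.cos θ, Real.sin θ] : E2) 1 = Real.sin θ := rfl
    rw [e0] at h0; rw [e1] at h1
    nlinarith [Real.sin_sq_add_cos_sq θ])

lemma sigm_continuous : Continuous sigm := by
  have hE : Continuous fun θ : ℝ => ((WithLp.equiv 2 (Fin 2 → ℝ)).symm ![Real.cos θ, Real.sin θ] : E2) := by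
    apply (PiLp.continuous_toLp (p := 2) (β := fun _ : Fin 2 => ℝ)).comp
    apply continuous_pi
    intro i
    fin_cases i
    · simpa using Real.continuous_cos
    · simpa using Real.continuous_sin
  exact continuous_quot_mk.comp (Continuous.subtype_mk hE _)

lemma sigm_surj : ∀ P : RP1, ∃ θ ∈ Icc (-π) π, sigm θ = P := by
  intro P
  induction P using Projectivization.ind with | h v hv =>
  have hz : zc v ≠ 0 := by
    intro h
    apply hv
    rw [E2_eq_zero_iff]
    constructor
    · rw [← zc_re v, h]; rfl
    · rw [← zc_im v, h]; rfl
  set θ := Complex.arg (zc v) with hθ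
  have hmem : θ ∈ Icc (-π) π := ⟨(Complex.arg_mem_Ioc (zc v)).1.le, (Complex.arg_mem_Ioc (zc v)).2⟩
  refine ⟨θ, hmem, ?_⟩
  unfold sigm
  rw [Projectivization.mk_eq_mk_iff']
  refine ⟨(‖zc v‖)⁻¹, ?_⟩
  ext i
  have habs : ‖zc v‖ ≠ 0 := by
    simpa using hz
  fin_cases i
  · show (‖zc v‖)⁻¹ * v 0 = Real.cos θ
    rw [hθ, Complex.cos_arg hz, zc_re, inv_mul_eq_div]
  · show (‖zc v‖)⁻¹ * v 1 = Real.sin θ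
    rw [hθ, Complex.sin_arg, zc_im, inv_mul_eq_div]

instance : CompactSpace RP1 := by
  constructor
  have : (univ : Set RP1) = sigm '' (Icc (-π) π) := by
    apply Set.eq_of_subset_of_subset
    · intro P _
      obtain ⟨θ, hθ, hP⟩ := sigm_surj P
      exact ⟨θ, hθ, hP⟩
    · exact fun _ _ => trivial
  rw [this]
  exact isCompact_Icc.image sigm_continuous

def PhiEquiv : RP1 ≃ Circle := Equiv.ofBijective Phi ⟨Phi_injective, Phi_surjective⟩

def PhiH : RP1 ≃ₜ Circle := Continuous.homeoOfEquivCompactToT2 (f := PhiEquiv) Phi_continuous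

lemma PhiH_apply (P : RP1) : PhiH P = Phi P := rfl


end Geom
end Aux

lemma arith1 {k d : ℤ} (hk : 4 ≤ k) (h : k * d = d + 2) : False := by
  rcases le_or_gt d 0 with hd | hd
  · have h1 : k * d ≤ 4 * d := mul_le_mul_of_nonpos_right hk hd
    rw [h] at h1
    omega
  · have h1 : 4 * d ≤ k * d := mul_le_mul_of_nonneg_right hk hd.le
    rw [h] at h1
    omega

lemma arith2 {k d : ℤ} (hk : 4 ≤ k) (h : k * d = -(d + 2)) : False := by
  rcases le_or_gt d 0 with hd | hd
  · have h1 : k * d ≤ 4 * d := mul_le_mul_of_nonpos_right hk hd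
    rw [h] at h1
    have hd0 : d = 0 := by omega
    rw [hd0] at h
    simp at h
  · have h1 : 4 * d ≤ k * d := mul_le_mul_of_nonneg_right hk hd.le
    rw [h] at h1
    omega

open Real in
/-- If `A₀ ∈ SL(2,ℝ)`, `k ≥ 4`, and `f(x) = kx mod 1`, then there is no
continuous map `ξ : ℝ/ℤ → ℝP¹` (modelled as a continuous `1`-periodic map on `ℝ`)
satisfying `ξ(f x) = A₀ R_x · ξ(x)` for all `x`. -/
theorem no_invariant_section (A₀ : SL2) (k : ℕ) (hk : 4 ≤ k) :
    ¬ ∃ ξ : ℝ → RP1, Continuous ξ ∧ (∀ x : ℝ, ξ (x + 1) = ξ x) ∧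
      (∀ x : ℝ, ξ ((k : ℝ) * x) = projAction (A₀ * RotSL x) (ξ x)) := by
  rintro ⟨ξ, hξc, hper, heq⟩
  have hπ : (0:ℝ) < π := Real.pi_pos
  set g : ℝ → Circle := fun x => PhiH (ξ x) with hgdef
  have hgc : Continuous g := PhiH.continuous.comp hξc
  have hgper : ∀ x, g (x+1) = g x := fun x => by simp only [hgdef, hper x]
  set h : Circle → Circle := fun z => PhiH (projAction A₀ (PhiH.symm z)) with hhdef
  set h' : Circle → Circle := fun z => PhiH (projAction A₀⁻¹ (PhiH.symm z)) with hh'def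
  have hhc : Continuous h :=
    PhiH.continuous.comp ((projAction_continuous A₀).comp PhiH.symm.continuous)
  have hinv2 : ∀ z, h' (h z) = z := by
    intro z
    simp only [hhdef, hh'def, Homeomorph.symm_apply_apply]
    rw [← projAction_mul, inv_mul_cancel]
    have : projAction 1 (PhiH.symm z) = PhiH.symm z := by
      have := projAction_inv 1 (PhiH.symm z)
      rwa [inv_one, ← projAction_mul, one_mul] at this
    rw [this, Homeomorph.apply_symm_apply]
  have hfun : ∀ x : ℝ, g ((k:ℝ) * x) = h (Circle.exp (4*π*x) * g x) := by
    intro x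
    have hr : PhiH (projAction (RotSL x) (ξ x)) = Circle.exp (4*π*x) * g x := by
      rw [PhiH_apply, Phi_rot, hgdef]
      rfl
    simp only [hgdef]
    rw [heq x, projAction_mul, ← hr]
    show _ = PhiH (projAction A₀ (PhiH.symm (PhiH (projAction (RotSL x) (ξ x)))))
    rw [Homeomorph.symm_apply_apply]
  -- lift of g on [0, k+1]
  obtain ⟨G, hGc, hGlift⟩ := exists_lift g hgc 0 ((k:ℝ)+1) (by positivity)
  have hkR : (4:ℝ) ≤ (k:ℝ) := by exact_mod_cast hk
  -- the degree d of g
  have hd2 : ∀ x ∈ Icc (0:ℝ) (k:ℝ), ∃ n : ℤ, (G (x+1) - G x) = n * (2*π) := by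
    intro x hx
    have h1 : Circle.exp (G (x+1)) = g (x+1) :=
      hGlift (x+1) ⟨by linarith [hx.1], by linarith [hx.2]⟩
    have h2 : Circle.exp (G x) = g x := hGlift x ⟨hx.1, by linarith [hx.2]⟩
    have : Circle.exp (G (x+1)) = Circle.exp (G x) := by rw [h1, h2, hgper]
    obtain ⟨n, hn⟩ := Circle.exp_eq_exp.mp this
    exact ⟨n, by linarith⟩
  have hc1c : Continuous fun x : ℝ => G (x+1) - G x := by fun_prop
  have hconst1 := const_mult hc1c hd2
  obtain ⟨dInt, hdInt⟩ := hd2 0 ⟨le_refl 0, by linarith⟩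
  have hGstep : ∀ x ∈ Icc (0:ℝ) (k:ℝ), G (x+1) = G x + dInt * (2*π) := by
    intro x hx
    have := hconst1 x hx
    norm_num at this hdInt
    linarith
  have hGnat : ∀ j : ℕ, j ≤ k → G j = G 0 + j * dInt * (2*π) := by
    intro j
    induction j with
    | zero => intro _; simp
    | succ j ih =>
      intro hj
      have hjk : (j:ℝ) ∈ Icc (0:ℝ) (k:ℝ) := by
        constructor
        · positivity
        · have : (j:ℝ) + 1 ≤ k := by exact_mod_cast hj
          linarith
      have := hGstep _ hjk
      push_cast
      rw [ih (by omega)] at this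
      push_cast at this
      linarith
  -- u and its bounds
  set u : ℝ → ℝ := fun x => 4*π*x + G x with hu
  have huc : Continuous u := (continuous_const.mul continuous_id).add hGc
  obtain ⟨xm, hxm01, hxm⟩ := isCompact_Icc.exists_isMinOn (Set.nonempty_Icc.mpr zero_le_one)
    huc.continuousOn
  obtain ⟨xM, hxM01, hxM⟩ := isCompact_Icc.exists_isMaxOn (Set.nonempty_Icc.mpr zero_le_one)
    huc.continuousOn
  set A : ℝ := u xm with hA
  set B : ℝ := u xM with hB
  have hbound : ∀ x ∈ Icc (0:ℝ) 1, A ≤ u x ∧ u x ≤ B :=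
    fun x hx => ⟨hxm hx, hxM hx⟩
  have hAB : A ≤ B := by
    obtain ⟨h1, h2⟩ := hbound 0 ⟨le_refl 0, zero_le_one⟩
    linarith
  set B' : ℝ := max B (A + 2*π) with hB'
  have hBB' : B ≤ B' := le_max_left _ _
  have hAB' : A + 2*π ≤ B' := le_max_right _ _
  have hAB'2 : A ≤ B' := by linarith
  -- lift of h ∘ exp
  obtain ⟨H, hHc, hHlift⟩ := exists_lift (fun t => h (Circle.exp t)) (hhc.comp Circle.exp.continuous)
    A (B' + 2*π) (by linarith)
  -- the degree m of h
  have hm2 : ∀ t ∈ Icc A B', ∃ n : ℤ, (H (t + 2*π) - H t) = n * (2*π) := by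
    intro t ht
    have h1 : Circle.exp (H (t + 2*π)) = h (Circle.exp (t + 2*π)) :=
      hHlift (t+2*π) ⟨by linarith [ht.1], by linarith [ht.2]⟩
    have h2 : Circle.exp (H t) = h (Circle.exp t) := hHlift t ⟨ht.1, by linarith [ht.2]⟩
    have hper2 : Circle.exp (t + 2*π) = Circle.exp t := Circle.periodic_exp t
    have : Circle.exp (H (t + 2*π)) = Circle.exp (H t) := by rw [h1, h2, hper2]
    obtain ⟨n, hn⟩ := Circle.exp_eq_exp.mp this
    exact ⟨n, by linarith⟩
  have hc2c : Continuous fun t : ℝ => H (t + 2*π) - H t := by fun_prop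
  have hconst2 := const_mult hc2c hm2
  obtain ⟨mInt, hmInt⟩ := hm2 A ⟨le_refl A, hAB'2⟩
  have hmstep : ∀ t ∈ Icc A B', H (t + 2*π) = H t + mInt * (2*π) := by
    intro t ht
    have := hconst2 t ht
    linarith
  -- the functional equation, lifted
  have hc2 : ∀ x ∈ Icc (0:ℝ) 1, ∃ n : ℤ, (G ((k:ℝ)*x) - H (u x)) = n * (2*π) := by
    intro x hx
    have hkx : (k:ℝ)*x ∈ Icc (0:ℝ) ((k:ℝ)+1) := by
      constructor
      · have := hx.1; nlinarith
      · have := hx.2; nlinarith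
    have h1 : Circle.exp (G ((k:ℝ)*x)) = g ((k:ℝ)*x) := hGlift _ hkx
    have hx' : x ∈ Icc (0:ℝ) ((k:ℝ)+1) := ⟨hx.1, by linarith [hx.2]⟩
    have h2 : Circle.exp (u x) = Circle.exp (4*π*x) * g x := by
      rw [hu]
      show Circle.exp (4*π*x + G x) = _
      rw [Circle.exp_add, hGlift x hx']
    have hux : u x ∈ Icc A (B' + 2*π) := by
      obtain ⟨hl, hr⟩ := hbound x hx
      exact ⟨hl, by linarith⟩
    have h3 : Circle.exp (H (u x)) = h (Circle.exp (u x)) := hHlift _ hux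
    have : Circle.exp (G ((k:ℝ)*x)) = Circle.exp (H (u x)) := by
      rw [h1, h3, h2, hfun x]
    obtain ⟨n, hn⟩ := Circle.exp_eq_exp.mp this
    exact ⟨n, by linarith⟩
  have hc3c : Continuous fun x : ℝ => G ((k:ℝ)*x) - H (u x) := by fun_prop
  have hconst3 := const_mult hc3c hc2
  have hmain := hconst3 1 ⟨zero_le_one, le_refl 1⟩
  -- compute the pieces
  have hu0 : u 0 = G 0 := by rw [hu]; simp
  have hu1 : u 1 = G 0 + (dInt + 2) * (2*π) := by
    have hG1 : G 1 = G 0 + dInt * (2*π) := by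
      have := hGstep 0 ⟨le_refl 0, by linarith⟩
      rw [zero_add] at this
      exact this
    rw [hu]
    show 4*π*1 + G 1 = _
    rw [hG1]
    push_cast
    ring
  have hGk : G (k:ℝ) = G 0 + (k:ℝ) * dInt * (2*π) := by
    have := hGnat k (le_refl k)
    exact_mod_cast this
  have hu0mem : G 0 ∈ Icc A B' := by
    obtain ⟨hl, hr⟩ := hbound 0 ⟨le_refl 0, zero_le_one⟩
    rw [hu0] at hl hr
    exact ⟨hl, by linarith⟩
  have hu1mem : G 0 + (dInt + 2) * (2*π) ∈ Icc A B' := by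
    obtain ⟨hl, hr⟩ := hbound 1 ⟨zero_le_one, le_refl 1⟩
    rw [hu1] at hl hr
    exact ⟨hl, by linarith⟩
  have hHiter : H (G 0 + (dInt + 2) * (2*π)) = H (G 0) + (dInt + 2) * mInt * (2*π) := by
    have := iterate_lift hmstep (dInt + 2) (G 0) hu0mem (by push_cast; exact hu1mem)
    push_cast at this ⊢
    linarith
  -- main equation : k d = (d+2) m
  have hKeyR : (k:ℝ) * dInt * (2*π) = (dInt + 2) * mInt * (2*π) := by
    have e1 : G ((k:ℝ)*1) - H (u 1) = G ((k:ℝ)*0) - H (u 0) := hmain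
    rw [mul_one, mul_zero, hu0, hu1, hGk, hHiter] at e1
    linarith
  have hKey : (k:ℤ) * dInt = (dInt + 2) * mInt := by
    have h2π : (2*π) ≠ 0 := by positivity
    have := mul_right_cancel₀ h2π hKeyR
    exact_mod_cast this
  -- now show mInt = ±1 using h'
  obtain ⟨C₁, hC1mem, hC1⟩ := isCompact_Icc.exists_isMinOn
    (Set.nonempty_Icc.mpr (by linarith : A ≤ B' + 2*π)) hHc.continuousOn
  obtain ⟨C₂, hC2mem, hC2⟩ := isCompact_Icc.exists_isMaxOn
    (Set.nonempty_Icc.mpr (by linarith : A ≤ B' + 2*π)) hHc.continuousOn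
  have hh'c : Continuous h' :=
    PhiH.continuous.comp ((projAction_continuous A₀⁻¹).comp PhiH.symm.continuous)
  have hC12 : H C₁ ≤ H C₂ := by
    have := hC1 hC2mem
    exact this
  obtain ⟨H', hH'c, hH'lift⟩ := exists_lift (fun t => h' (Circle.exp t))
    (hh'c.comp Circle.exp.continuous) (H C₁) (H C₂ + 2*π) (by linarith)
  have hm'2 : ∀ s ∈ Icc (H C₁) (H C₂), ∃ n : ℤ, (H' (s + 2*π) - H' s) = n * (2*π) := by
    intro s hs
    have h1 : Circle.exp (H' (s + 2*π)) = h' (Circle.exp (s + 2*π)) :=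
      hH'lift (s+2*π) ⟨by linarith [hs.1], by linarith [hs.2]⟩
    have h2 : Circle.exp (H' s) = h' (Circle.exp s) := hH'lift s ⟨hs.1, by linarith [hs.2]⟩
    have : Circle.exp (H' (s + 2*π)) = Circle.exp (H' s) := by
      rw [h1, h2, Circle.periodic_exp]
    obtain ⟨n, hn⟩ := Circle.exp_eq_exp.mp this
    exact ⟨n, by linarith⟩
  have hc4c : Continuous fun s : ℝ => H' (s + 2*π) - H' s := by fun_prop
  have hconst4 := const_mult hc4c hm'2
  obtain ⟨m'Int, hm'Int⟩ := hm'2 (H C₁) ⟨le_refl _, hC12⟩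
  have hm'step : ∀ s ∈ Icc (H C₁) (H C₂), H' (s + 2*π) = H' s + m'Int * (2*π) := by
    intro s hs
    have := hconst4 s hs
    linarith
  -- composition: H'(H t) - t constant on [A, A+2π]
  have hHmem : ∀ t ∈ Icc A (B' + 2*π), H t ∈ Icc (H C₁) (H C₂) := by
    intro t ht
    exact ⟨hC1 ht, hC2 ht⟩
  have hcc : ∀ t ∈ Icc A (A + 2*π), ∃ n : ℤ, (H' (H t) - t) = n * (2*π) := by
    intro t ht
    have htmem : t ∈ Icc A (B' + 2*π) := ⟨ht.1, by linarith [ht.2]⟩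
    have hHt := hHmem t htmem
    have h1 : Circle.exp (H' (H t)) = h' (Circle.exp (H t)) :=
      hH'lift _ ⟨hHt.1, by linarith [hHt.2]⟩
    have h2 : Circle.exp (H t) = h (Circle.exp t) := hHlift t htmem
    have : Circle.exp (H' (H t)) = Circle.exp t := by
      rw [h1, h2, hinv2]
    obtain ⟨n, hn⟩ := Circle.exp_eq_exp.mp this
    exact ⟨n, by linarith⟩
  have hc5c : Continuous fun t : ℝ => H' (H t) - t := by fun_prop
  have hconst5 := const_mult hc5c hcc
  have hAmem : A ∈ Icc A B' := ⟨le_refl A, hAB'2⟩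
  have hA2πIcc : A + 2*π ∈ Icc A (A + 2*π) := ⟨by linarith, le_refl _⟩
  have e2 : H' (H (A + 2*π)) - (A + 2*π) = H' (H A) - A := by
    have := hconst5 (A + 2*π) hA2πIcc
    simpa using this
  have e3 : H (A + 2*π) = H A + mInt * (2*π) := hmstep A hAmem
  have hHA : H A ∈ Icc (H C₁) (H C₂) := hHmem A ⟨le_refl A, by linarith⟩
  have hHA2π : H A + mInt * (2*π) ∈ Icc (H C₁) (H C₂) := by
    rw [← e3]
    exact hHmem _ ⟨by linarith, by linarith⟩
  have e4 : H' (H A + mInt * (2*π)) = H' (H A) + mInt * m'Int * (2*π) := by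
    have := iterate_lift hm'step mInt (H A) hHA (by push_cast; exact_mod_cast hHA2π)
    push_cast at this ⊢
    linarith
  have hmm' : mInt * m'Int = 1 := by
    rw [e3] at e2
    rw [e4] at e2
    have : (mInt * m'Int : ℝ) * (2*π) = 1 * (2*π) := by push_cast; linarith
    have h2π : (2*π : ℝ) ≠ 0 := by positivity
    have := mul_right_cancel₀ h2π this
    exact_mod_cast this
  -- finish
  have hkZ : (4:ℤ) ≤ (k:ℤ) := by exact_mod_cast hk
  rcases (Int.mul_eq_one_iff_eq_one_or_neg_one.mp hmm') with ⟨hm1, _⟩ | ⟨hm1, _⟩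
  · rw [hm1, mul_one] at hKey
    exact arith1 hkZ hKey
  · rw [hm1] at hKey
    exact arith2 (d := dInt) hkZ (by linear_combination hKey)

end
end

section
/- With notation as above, for any measurable A : M → SL(2,ℝ) over ergodic (f, μ), every F_A-invariant probability measure m on M × ℝP¹ projecting to μ satisfies −λ(A) ≤ ∫ φ_A dm ≤ λ(A), where λ(A) is the Lyapunov exponent and φ_A(x,[v]) = log(‖A(x)v‖/‖v‖). -/
set_option maxHeartbeats 1000000
set_option synthInstance.maxHeartbeats 1000000


open Matrix MeasureTheory Set Filter Topology
open scoped ENNReal NNReal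

noncomputable section

-- Part 1: algebra lemmas

lemma sl2CLM_mul_s10 (S T : SL2) : sl2CLM (S * T) = sl2CLM S * sl2CLM T := by
  rw [sl2CLM, Matrix.SpecialLinearGroup.coe_mul, _root_.map_mul]; rfl

lemma sl2CLM_one : sl2CLM 1 = 1 := by
  rw [sl2CLM, Matrix.SpecialLinearGroup.coe_one, _root_.map_one]

lemma norm_star' (T : E2 →L[ℝ] E2) : ‖star T‖ = ‖T‖ := by
  rw [ContinuousLinearMap.star_eq_adjoint]
  exact LinearIsometryEquiv.norm_map ContinuousLinearMap.adjoint T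

def Jmat : Matrix (Fin 2) (Fin 2) ℝ := !![0,-1;1,0]

lemma transpose_fin_two' {α : Type*} (a b c d : α) : (!![a,b;c,d])ᵀ = !![a,c;b,d] := by
  ext i j
  fin_cases i <;> fin_cases j <;> simp

lemma star_Jmat : star Jmat = !![0,1;-1,0] := by
  rw [Matrix.star_eq_conjTranspose, Matrix.conjTranspose_eq_transpose_of_trivial, Jmat,
    transpose_fin_two']

lemma coe_inv_eq (S : SL2) :
    ((S⁻¹ : SL2) : Matrix (Fin 2) (Fin 2) ℝ) = Jmat * star ((S : Matrix (Fin 2) (Fin 2) ℝ)) * star Jmat := by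
  have hS := Matrix.eta_fin_two (S : Matrix (Fin 2) (Fin 2) ℝ)
  rw [Matrix.SpecialLinearGroup.coe_inv, star_Jmat]
  rw [hS, Matrix.star_eq_conjTranspose, Matrix.conjTranspose_eq_transpose_of_trivial,
    Matrix.adjugate_fin_two, transpose_fin_two', Jmat, Matrix.mul_fin_two, Matrix.mul_fin_two]
  ext i j
  fin_cases i <;> fin_cases j <;> simp

lemma norm_CLM_Jmat : ‖Matrix.toEuclideanCLM (𝕜 := ℝ) Jmat‖ = 1 := by
  have h : star Jmat * Jmat = 1 := by
    rw [star_Jmat]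
    ext i j
    fin_cases i <;> fin_cases j <;> simp [Jmat, Matrix.mul_apply, Fin.sum_univ_two]
  have h2 : star (Matrix.toEuclideanCLM (𝕜 := ℝ) Jmat) * Matrix.toEuclideanCLM (𝕜 := ℝ) Jmat = 1 := by
    rw [← map_star, ← _root_.map_mul, h, _root_.map_one]
  have h3 := CStarRing.norm_star_mul_self (x := Matrix.toEuclideanCLM (𝕜 := ℝ) Jmat)
  rw [h2] at h3
  have h4 : ‖(1 : E2 →L[ℝ] E2)‖ = 1 := norm_one
  rw [h4] at h3
  nlinarith [norm_nonneg (Matrix.toEuclideanCLM (𝕜 := ℝ) Jmat)]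

lemma norm_sl2CLM_inv_le (S : SL2) : ‖sl2CLM S⁻¹‖ ≤ ‖sl2CLM S‖ := by
  have hstarJ : ‖Matrix.toEuclideanCLM (𝕜 := ℝ) (star Jmat)‖ = 1 := by
    rw [map_star, norm_star', norm_CLM_Jmat]
  calc ‖sl2CLM S⁻¹‖
      = ‖Matrix.toEuclideanCLM (𝕜 := ℝ) Jmat * star (sl2CLM S) *
          Matrix.toEuclideanCLM (𝕜 := ℝ) (star Jmat)‖ := by
        rw [sl2CLM, coe_inv_eq, _root_.map_mul, _root_.map_mul, sl2CLM, ← map_star]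
    _ ≤ ‖Matrix.toEuclideanCLM (𝕜 := ℝ) Jmat * star (sl2CLM S)‖ *
          ‖Matrix.toEuclideanCLM (𝕜 := ℝ) (star Jmat)‖ := norm_mul_le _ _
    _ ≤ ‖Matrix.toEuclideanCLM (𝕜 := ℝ) Jmat‖ * ‖star (sl2CLM S)‖ *
          ‖Matrix.toEuclideanCLM (𝕜 := ℝ) (star Jmat)‖ := by
        gcongr; exact norm_mul_le _ _
    _ = ‖sl2CLM S‖ := by rw [norm_CLM_Jmat, hstarJ, norm_star']; ring

lemma norm_sl2CLM_inv (S : SL2) : ‖sl2CLM S⁻¹‖ = ‖sl2CLM S‖ := by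
  refine le_antisymm (norm_sl2CLM_inv_le S) ?_
  have := norm_sl2CLM_inv_le S⁻¹
  rwa [inv_inv] at this

lemma one_le_norm_sl2CLM (S : SL2) : 1 ≤ ‖sl2CLM S‖ := by
  have h1 : sl2CLM S * sl2CLM S⁻¹ = 1 := by
    rw [← sl2CLM_mul_s10, mul_inv_cancel, sl2CLM_one]
  have h2 : (1:ℝ) ≤ ‖sl2CLM S‖ * ‖sl2CLM S⁻¹‖ := by
    calc (1:ℝ) = ‖(1 : E2 →L[ℝ] E2)‖ := norm_one.symm
      _ = ‖sl2CLM S * sl2CLM S⁻¹‖ := by rw [h1]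
      _ ≤ _ := norm_mul_le _ _
  rw [norm_sl2CLM_inv] at h2
  nlinarith [norm_nonneg (sl2CLM S)]

lemma log_norm_sl2CLM_nonneg (S : SL2) : 0 ≤ Real.log ‖sl2CLM S‖ :=
  Real.log_nonneg (one_le_norm_sl2CLM S)

lemma sl2CLM_apply_ne_zero (S : SL2) {w : E2} (hw : w ≠ 0) : sl2CLM S w ≠ 0 := by
  intro h
  exact hw (sl2CLM_injective S (by simpa using h))

lemma ratio_pos (S : SL2) {w : E2} (hw : w ≠ 0) : 0 < ‖sl2CLM S w‖ / ‖w‖ :=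
  div_pos (norm_pos_iff.2 (sl2CLM_apply_ne_zero S hw)) (norm_pos_iff.2 hw)

lemma log_ratio_le (S : SL2) {w : E2} (hw : w ≠ 0) :
    Real.log (‖sl2CLM S w‖ / ‖w‖) ≤ Real.log ‖sl2CLM S‖ :=
  Real.log_le_log (ratio_pos S hw)
    ((div_le_iff₀ (norm_pos_iff.2 hw)).2 (ContinuousLinearMap.le_opNorm _ _))

lemma neg_log_le_log_ratio (S : SL2) {w : E2} (hw : w ≠ 0) :
    -Real.log ‖sl2CLM S⁻¹‖ ≤ Real.log (‖sl2CLM S w‖ / ‖w‖) := by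
  have hW : ‖w‖ ≤ ‖sl2CLM S⁻¹‖ * ‖sl2CLM S w‖ := by
    have : sl2CLM S⁻¹ (sl2CLM S w) = w := by
      rw [← ContinuousLinearMap.mul_apply, ← sl2CLM_mul_s10, inv_mul_cancel, sl2CLM_one,
        ContinuousLinearMap.one_apply]
    calc ‖w‖ = ‖sl2CLM S⁻¹ (sl2CLM S w)‖ := by rw [this]
      _ ≤ _ := ContinuousLinearMap.le_opNorm _ _
  have hpos : (0:ℝ) < ‖sl2CLM S⁻¹‖ := lt_of_lt_of_le one_pos (one_le_norm_sl2CLM _)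
  rw [← Real.log_inv]
  refine Real.log_le_log (by positivity) ?_
  rw [le_div_iff₀ (norm_pos_iff.2 hw), inv_mul_le_iff₀ hpos]
  linarith

lemma abs_log_ratio_le (S : SL2) {w : E2} (hw : w ≠ 0) :
    |Real.log (‖sl2CLM S w‖ / ‖w‖)| ≤ Real.log ‖sl2CLM S‖ := by
  rw [abs_le]
  constructor
  · have := neg_log_le_log_ratio S hw
    rwa [norm_sl2CLM_inv] at this
  · exact log_ratio_le S hw


-- Part 2: topology and measurability

abbrev NZ2 := {v : E2 // v ≠ 0}

def qmap : NZ2 → RP1 := Projectivization.mk' ℝ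

lemma isQuotientMap_qmap : Topology.IsQuotientMap qmap :=
  isQuotientMap_quotient_mk'

lemma qmap_eq (w : NZ2) : qmap w = Projectivization.mk ℝ w.1 w.2 := rfl

lemma exists_units_smul_rep (w : NZ2) : ∃ a : ℝˣ, (a : ℝ) • w.1 = (qmap w).rep := by
  have h1 : Projectivization.mk ℝ (qmap w).rep (Projectivization.rep_nonzero _) = qmap w :=
    Projectivization.mk_rep _
  rw [qmap_eq, Projectivization.mk_eq_mk_iff] at h1
  obtain ⟨a, ha⟩ := h1
  exact ⟨a, by rw [← Units.smul_def, ha]; rfl⟩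

lemma isOpenMap_qmap : IsOpenMap qmap := by
  intro U hU
  have key : qmap ⁻¹' (qmap '' U) =
      ⋃ c : ℝˣ, (fun w : NZ2 => (⟨(c : ℝ) • w.1, by
        simp [smul_ne_zero_iff, w.2, c.ne_zero]⟩ : NZ2)) ⁻¹' U := by
    ext w
    simp only [Set.mem_preimage, Set.mem_image, Set.mem_iUnion]
    constructor
    · rintro ⟨u, hu, huw⟩
      rw [qmap_eq, qmap_eq, Projectivization.mk_eq_mk_iff] at huw
      obtain ⟨a, ha⟩ := huw
      refine ⟨a, ?_⟩
      convert hu using 1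
      exact Subtype.ext (show (a : ℝ) • w.1 = u.1 by rw [← Units.smul_def]; exact ha)
    · rintro ⟨c, hc⟩
      refine ⟨_, hc, ?_⟩
      rw [qmap_eq, qmap_eq, Projectivization.mk_eq_mk_iff]
      exact ⟨c, rfl⟩
  rw [← isQuotientMap_qmap.isOpen_preimage, key]
  refine isOpen_iUnion fun c => hU.preimage ?_
  exact Continuous.subtype_mk (continuous_subtype_val.const_smul ((c : ℝ))) _

lemma surjective_qmap : Function.Surjective qmap := by
  intro v
  refine ⟨⟨v.rep, Projectivization.rep_nonzero v⟩, ?_⟩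
  rw [qmap_eq]
  exact Projectivization.mk_rep v

lemma isOpenQuotientMap_qmap : IsOpenQuotientMap qmap :=
  ⟨surjective_qmap, isQuotientMap_qmap.continuous, isOpenMap_qmap⟩

instance : SecondCountableTopology RP1 :=
  TopologicalSpace.Quotient.secondCountableTopology (S := projectivizationSetoid ℝ E2)
    isOpenMap_qmap

lemma continuous_ratio :
    Continuous (fun q : (E2 →L[ℝ] E2) × RP1 => ‖q.1 q.2.rep‖ / ‖q.2.rep‖) := by
  have hq : Topology.IsQuotientMap (Prod.map (id : (E2 →L[ℝ] E2) → (E2 →L[ℝ] E2)) qmap) :=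
    (IsOpenQuotientMap.id.prodMap isOpenQuotientMap_qmap).isQuotientMap
  rw [hq.continuous_iff]
  have heq : (fun q : (E2 →L[ℝ] E2) × RP1 => ‖q.1 q.2.rep‖ / ‖q.2.rep‖) ∘
      (Prod.map (id : (E2 →L[ℝ] E2) → (E2 →L[ℝ] E2)) qmap)
      = fun p : (E2 →L[ℝ] E2) × NZ2 => ‖p.1 p.2.1‖ / ‖p.2.1‖ := by
    funext p
    obtain ⟨B, w⟩ := p
    obtain ⟨a, ha⟩ := exists_units_smul_rep w
    show ‖B (qmap w).rep‖ / ‖(qmap w).rep‖ = ‖B w.1‖ / ‖w.1‖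
    rw [← ha, _root_.map_smul, norm_smul, norm_smul, mul_div_mul_left]
    simpa using a.ne_zero
  rw [heq]
  refine Continuous.div ?_ ?_ ?_
  · exact (isBoundedBilinearMap_apply.continuous.comp
      (continuous_fst.prodMk (continuous_subtype_val.comp continuous_snd))).norm
  · exact (continuous_subtype_val.comp continuous_snd).norm
  · intro p; exact norm_ne_zero_iff.2 p.2.2

abbrev CLMI := {B : E2 →L[ℝ] E2 // Function.Injective B}

instance : OpensMeasurableSpace CLMI :=
  inferInstanceAs (OpensMeasurableSpace ({B : E2 →L[ℝ] E2 | Function.Injective ⇑B} : Set _))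

lemma continuous_projmap :
    Continuous (fun q : CLMI × RP1 =>
      Projectivization.map (q.1.1 : E2 →ₗ[ℝ] E2) q.1.2 q.2) := by
  have hq : Topology.IsQuotientMap (Prod.map (id : CLMI → CLMI) qmap) :=
    (IsOpenQuotientMap.id.prodMap isOpenQuotientMap_qmap).isQuotientMap
  rw [hq.continuous_iff]
  have heq : (fun q : CLMI × RP1 => Projectivization.map (q.1.1 : E2 →ₗ[ℝ] E2) q.1.2 q.2) ∘
      (Prod.map (id : CLMI → CLMI) qmap)
      = fun p : CLMI × NZ2 => qmap ⟨p.1.1 p.2.1, fun h => p.2.2 (p.1.2 (by simpa using h))⟩ := by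
    funext p
    obtain ⟨B, w⟩ := p
    show Projectivization.map (B.1 : E2 →ₗ[ℝ] E2) B.2 (qmap w) = _
    rw [qmap_eq, qmap_eq]
    exact Projectivization.map_mk (B.1 : E2 →ₗ[ℝ] E2) B.2 w.1 w.2
  rw [heq]
  refine isQuotientMap_qmap.continuous.comp (Continuous.subtype_mk ?_ _)
  exact isBoundedBilinearMap_apply.continuous.comp
    ((continuous_subtype_val.comp continuous_fst).prodMk (continuous_subtype_val.comp continuous_snd))

section Meas

variable {M : Type*} [MeasurableSpace M]

lemma measurable_ratio :
    Measurable (fun q : (E2 →L[ℝ] E2) × RP1 => ‖q.1 q.2.rep‖ / ‖q.2.rep‖) :=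
  continuous_ratio.measurable

lemma measurable_phiA' {A : M → SL2} (hA : Measurable fun x => sl2CLM (A x)) :
    Measurable (fun p : M × RP1 => Real.log (‖sl2CLM (A p.1) p.2.rep‖ / ‖p.2.rep‖)) := by
  have h := measurable_ratio.comp ((hA.comp measurable_fst).prodMk measurable_snd
    (β := (E2 →L[ℝ] E2)) (γ := RP1))
  simp only [Function.comp_def] at h
  exact h.log

lemma measurable_projmap :
    Measurable (fun q : CLMI × RP1 =>
      Projectivization.map (q.1.1 : E2 →ₗ[ℝ] E2) q.1.2 q.2) :=
  continuous_projmap.measurable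

lemma measurable_projAction {A : M → SL2} (hA : Measurable fun x => sl2CLM (A x)) :
    Measurable (fun p : M × RP1 => Projectivization.map
      ((sl2CLM (A p.1)) : E2 →ₗ[ℝ] E2) (sl2CLM_injective (A p.1)) p.2) := by
  have h := measurable_projmap.comp
    ((((hA.comp measurable_fst).subtype_mk).prodMk measurable_snd) :
      Measurable (fun p : M × RP1 =>
        ((⟨sl2CLM (A p.1), sl2CLM_injective (A p.1)⟩, p.2) : CLMI × RP1)))
  simp only [Function.comp_def] at h
  exact h

end Meas

variable {M : Type*}

/-- The matrix cocycle `Aⁿ(x) = A(f^{n-1}x) ⋯ A(x)`. -/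
def sl2Cocycle (f : M → M) (A : M → SL2) : ℕ → M → SL2
  | 0, _ => 1
  | n + 1, x => sl2Cocycle f A n (f x) * A x

/-- The projective cocycle `F_A(x,[v]) = (f(x), [A(x)v])`. -/
def projCocycle (f : M → M) (A : M → SL2) : M × RP1 → M × RP1 :=
  fun p => (f p.1, projAction (A p.1) p.2)

/-- `φ_A(x,[v]) = log (‖A(x)v‖ / ‖v‖)`, computed on a representative of `[v]`. -/
def phiA (A : M → SL2) : M × RP1 → ℝ :=
  fun p => Real.log (‖sl2CLM (A p.1) p.2.rep‖ / ‖p.2.rep‖)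


-- Part 3: cocycle lemmas

lemma log_ratio_smul (B : E2 →L[ℝ] E2) (a : ℝˣ) (u : E2) :
    ‖B ((a : ℝ) • u)‖ / ‖(a : ℝ) • u‖ = ‖B u‖ / ‖u‖ := by
  rw [_root_.map_smul, norm_smul, norm_smul, mul_div_mul_left]
  simpa using a.ne_zero

lemma projAction_eq (S : SL2) (v : RP1) :
    projAction S v = Projectivization.mk ℝ (sl2CLM S v.rep)
      (sl2CLM_apply_ne_zero S (Projectivization.rep_nonzero v)) := by
  conv_lhs => rw [projAction, ← Projectivization.mk_rep v]
  exact Projectivization.map_mk ((sl2CLM S) : E2 →ₗ[ℝ] E2) (sl2CLM_injective S) _ _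

lemma exists_units_smul_rep_mk (w : E2) (hw : w ≠ 0) :
    ∃ a : ℝˣ, (a : ℝ) • w = (Projectivization.mk ℝ w hw).rep :=
  exists_units_smul_rep ⟨w, hw⟩

section MeasM

variable [MeasurableSpace M] {f : M → M} {A : M → SL2}

lemma measurable_phiA (hA : Measurable fun x => sl2CLM (A x)) :
    Measurable (phiA A) := measurable_phiA' hA

lemma measurable_projCocycle (hf : Measurable f)
    (hA : Measurable fun x => sl2CLM (A x)) :
    Measurable (projCocycle f A) := by
  refine Measurable.prodMk (hf.comp measurable_fst) ?_
  exact measurable_projAction hA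

lemma measurable_cocycleCLM (hf : Measurable f)
    (hA : Measurable fun x => sl2CLM (A x)) (n : ℕ) :
    Measurable fun x => sl2CLM (sl2Cocycle f A n x) := by
  induction n with
  | zero => simpa [sl2Cocycle] using measurable_const (a := sl2CLM 1)
  | succ n ih =>
    have heq : (fun x => sl2CLM (sl2Cocycle f A (n+1) x)) =
        fun x => sl2CLM (sl2Cocycle f A n (f x)) * sl2CLM (A x) := by
      funext x; rw [show sl2Cocycle f A (n+1) x = sl2Cocycle f A n (f x) * A x from rfl,
        sl2CLM_mul_s10]
    rw [heq]
    exact (ih.comp hf).mul hA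

lemma log_norm_cocycle_le (f : M → M) (A : M → SL2) (n : ℕ) (x : M) :
    Real.log ‖sl2CLM (sl2Cocycle f A n x)‖ ≤
      ∑ k ∈ Finset.range n, Real.log ‖sl2CLM (A (f^[k] x))‖ := by
  induction n generalizing x with
  | zero => simp [sl2Cocycle, sl2CLM_one]
  | succ n ih =>
    have h1 : sl2CLM (sl2Cocycle f A (n+1) x) =
        sl2CLM (sl2Cocycle f A n (f x)) * sl2CLM (A x) := by
      rw [show sl2Cocycle f A (n+1) x = sl2Cocycle f A n (f x) * A x from rfl, sl2CLM_mul_s10]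
    have hpos1 : (0:ℝ) < ‖sl2CLM (sl2Cocycle f A n (f x))‖ :=
      lt_of_lt_of_le one_pos (one_le_norm_sl2CLM _)
    have hpos2 : (0:ℝ) < ‖sl2CLM (A x)‖ := lt_of_lt_of_le one_pos (one_le_norm_sl2CLM _)
    have hposm : (0:ℝ) < ‖sl2CLM (sl2Cocycle f A (n+1) x)‖ :=
      lt_of_lt_of_le one_pos (one_le_norm_sl2CLM _)
    have h2 : Real.log ‖sl2CLM (sl2Cocycle f A (n+1) x)‖ ≤
        Real.log ‖sl2CLM (sl2Cocycle f A n (f x))‖ + Real.log ‖sl2CLM (A x)‖ := by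
      calc Real.log ‖sl2CLM (sl2Cocycle f A (n+1) x)‖
          ≤ Real.log (‖sl2CLM (sl2Cocycle f A n (f x))‖ * ‖sl2CLM (A x)‖) := by
            refine Real.log_le_log hposm ?_
            rw [h1]; exact norm_mul_le _ _
        _ = _ := Real.log_mul (ne_of_gt hpos1) (ne_of_gt hpos2)
    refine h2.trans ?_
    rw [Finset.sum_range_succ']
    simp only [Function.iterate_succ_apply, Function.iterate_zero_apply]
    exact add_le_add (ih (f x)) le_rfl

lemma log_norm_cocycle_inv_le (f : M → M) (A : M → SL2) (n : ℕ) (x : M) :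
    Real.log ‖sl2CLM (sl2Cocycle f A n x)⁻¹‖ ≤
      ∑ k ∈ Finset.range n, Real.log ‖sl2CLM (A (f^[k] x))‖ := by
  induction n generalizing x with
  | zero => simp [sl2Cocycle, sl2CLM_one]
  | succ n ih =>
    have h1 : sl2CLM ((sl2Cocycle f A (n+1) x)⁻¹) =
        sl2CLM ((A x)⁻¹) * sl2CLM ((sl2Cocycle f A n (f x))⁻¹) := by
      rw [show sl2Cocycle f A (n+1) x = sl2Cocycle f A n (f x) * A x from rfl, _root_.mul_inv_rev,
        sl2CLM_mul_s10]
    have hpos1 : (0:ℝ) < ‖sl2CLM ((sl2Cocycle f A n (f x))⁻¹)‖ :=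
      lt_of_lt_of_le one_pos (one_le_norm_sl2CLM _)
    have hpos2 : (0:ℝ) < ‖sl2CLM ((A x)⁻¹)‖ := lt_of_lt_of_le one_pos (one_le_norm_sl2CLM _)
    have hposm : (0:ℝ) < ‖sl2CLM ((sl2Cocycle f A (n+1) x)⁻¹)‖ :=
      lt_of_lt_of_le one_pos (one_le_norm_sl2CLM _)
    have h2 : Real.log ‖sl2CLM ((sl2Cocycle f A (n+1) x)⁻¹)‖ ≤
        Real.log ‖sl2CLM ((A x)⁻¹)‖ + Real.log ‖sl2CLM ((sl2Cocycle f A n (f x))⁻¹)‖ := by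
      calc Real.log ‖sl2CLM ((sl2Cocycle f A (n+1) x)⁻¹)‖
          ≤ Real.log (‖sl2CLM ((A x)⁻¹)‖ * ‖sl2CLM ((sl2Cocycle f A n (f x))⁻¹)‖) := by
            refine Real.log_le_log hposm ?_
            rw [h1]; exact norm_mul_le _ _
        _ = _ := Real.log_mul (ne_of_gt hpos2) (ne_of_gt hpos1)
    refine h2.trans ?_
    rw [Finset.sum_range_succ']
    simp only [Function.iterate_succ_apply, Function.iterate_zero_apply]
    rw [norm_sl2CLM_inv (A x)]
    rw [add_comm]
    exact add_le_add (ih (f x)) le_rfl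

lemma birkhoff_sum_phiA (f : M → M) (A : M → SL2) (n : ℕ) (x : M) (v : RP1) :
    ∑ k ∈ Finset.range n, phiA A ((projCocycle f A)^[k] (x, v)) =
      Real.log (‖sl2CLM (sl2Cocycle f A n x) v.rep‖ / ‖v.rep‖) := by
  induction n generalizing x v with
  | zero =>
    simp [sl2Cocycle, sl2CLM_one, div_self (norm_ne_zero_iff.2 (Projectivization.rep_nonzero v))]
  | succ n ih =>
    rw [Finset.sum_range_succ']
    have hter : ∀ k, phiA A ((projCocycle f A)^[k + 1] (x, v)) =
        phiA A ((projCocycle f A)^[k] (f x, projAction (A x) v)) := by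
      intro k
      rw [Function.iterate_succ_apply]
      rfl
    simp only [hter, Function.iterate_zero_apply]
    rw [ih (f x) (projAction (A x) v)]
    set w := v.rep with hw
    have hwne : w ≠ 0 := Projectivization.rep_nonzero v
    set u := sl2CLM (A x) w with hu
    have hune : u ≠ 0 := sl2CLM_apply_ne_zero (A x) hwne
    obtain ⟨a, ha⟩ := exists_units_smul_rep_mk u hune
    have hpa : (projAction (A x) v).rep = (a : ℝ) • u := by
      rw [projAction_eq]; exact ha.symm
    have hterm1 : Real.log (‖sl2CLM (sl2Cocycle f A n (f x)) (projAction (A x) v).rep‖ /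
        ‖(projAction (A x) v).rep‖) = Real.log (‖sl2CLM (sl2Cocycle f A n (f x)) u‖ / ‖u‖) := by
      rw [hpa, log_ratio_smul]
    rw [hterm1]
    have hphi : phiA A (x, v) = Real.log (‖u‖ / ‖w‖) := rfl
    rw [hphi]
    have hCu : sl2CLM (sl2Cocycle f A n (f x)) u = sl2CLM (sl2Cocycle f A (n+1) x) w := by
      rw [hu, show sl2Cocycle f A (n+1) x = sl2Cocycle f A n (f x) * A x from rfl, sl2CLM_mul_s10]
      rfl
    rw [hCu]
    have hBpos : 0 < ‖sl2CLM (sl2Cocycle f A (n+1) x) w‖ :=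
      norm_pos_iff.2 (sl2CLM_apply_ne_zero _ hwne)
    have hupos : 0 < ‖u‖ := norm_pos_iff.2 hune
    have hwpos : 0 < ‖w‖ := norm_pos_iff.2 hwne
    rw [← Real.log_mul (by positivity) (by positivity)]
    congr 1
    field_simp
end MeasM


-- Part 4: integral average bound

section Avg

variable {X : Type*} [MeasurableSpace X]

lemma avg_bound (μ : MeasureTheory.Measure X) [IsProbabilityMeasure μ] {f : X → X}
    (hf : MeasurePreserving f μ μ)
    {ψ : X → ℝ} (hψm : Measurable ψ) (hψi : Integrable ψ μ) (hψ0 : ∀ x, 0 ≤ ψ x)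
    {C : ℕ → X → ℝ} (hCm : ∀ n, Measurable (C n)) (hC0 : ∀ n x, 0 ≤ C n x)
    (hCB : ∀ n x, C n x ≤ ∑ k ∈ Finset.range n, ψ (f^[k] x))
    {lam : ℝ} (hlam0 : 0 ≤ lam)
    (hlim : ∀ᵐ x ∂μ, Tendsto (fun n : ℕ => (n : ℝ)⁻¹ * C n x) atTop (𝓝 lam))
    {ε : ℝ} (hε : 0 < ε) :
    ∃ n : ℕ, 0 < n ∧ (n : ℝ)⁻¹ * ∫ x, C n x ∂μ ≤ lam + ε := by
  set ε' := ε / 3 with hε'def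
  have hε' : 0 < ε' := by positivity
  -- Step 1: choose K
  have htendK : Tendsto (fun K : ℕ => ∫ x, max (ψ x - K) 0 ∂μ) atTop (𝓝 0) := by
    have hconv : Tendsto (fun K : ℕ => ∫ x, max (ψ x - K) 0 ∂μ) atTop
        (𝓝 (∫ _ : X, (0:ℝ) ∂μ)) := by
      refine tendsto_integral_of_dominated_convergence ψ (fun K => ?_) hψi (fun K => ?_) ?_
      · exact ((hψm.sub measurable_const).max measurable_const).aestronglyMeasurable
      · refine Eventually.of_forall fun x => ?_
        rw [Real.norm_eq_abs, abs_of_nonneg (le_max_right _ _)]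
        refine max_le ?_ (hψ0 x)
        have : (0:ℝ) ≤ K := Nat.cast_nonneg K
        linarith
      · refine Eventually.of_forall fun x => ?_
        refine tendsto_atTop_of_eventually_const (i₀ := ⌈ψ x⌉₊) fun K hK => ?_
        have h1 : ψ x ≤ (K:ℝ) := le_trans (Nat.le_ceil _) (by exact_mod_cast hK)
        exact max_eq_right (by linarith)
    simpa using hconv
  obtain ⟨K, hK1, hKe⟩ : ∃ K : ℕ, 1 ≤ K ∧ ∫ x, max (ψ x - K) 0 ∂μ < ε' := by
    obtain ⟨K, h1, h2⟩ := ((htendK.eventually (Iio_mem_nhds hε')).and (eventually_ge_atTop 1)).exists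
    exact ⟨K, h2, h1⟩
  set Kr := (K : ℝ) with hKr
  have hKpos : (0:ℝ) < Kr := by rw [hKr]; exact_mod_cast hK1
  -- Step 2: convergence in measure
  have hin : TendstoInMeasure μ (fun (n : ℕ) x => (n:ℝ)⁻¹ * C n x) atTop (fun _ => lam) :=
    tendstoInMeasure_of_tendsto_ae (fun n => ((hCm n).const_mul _).aestronglyMeasurable) hlim
  have h2 : Tendsto (fun n : ℕ => μ {x | ε' ≤ dist ((n:ℝ)⁻¹ * C n x) lam}) atTop (𝓝 0) := by
    have := hin (ENNReal.ofReal ε') (ENNReal.ofReal_pos.2 hε')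
    refine this.congr fun n => ?_
    congr 1; ext x
    simp only [Set.mem_setOf_eq, edist_dist, ENNReal.ofReal_le_ofReal_iff dist_nonneg]
  have hofr : (0:ℝ≥0∞) < ENNReal.ofReal (ε' / Kr) := ENNReal.ofReal_pos.2 (by positivity)
  obtain ⟨n, hn1, hnm⟩ : ∃ n : ℕ, 1 ≤ n ∧
      μ {x | ε' ≤ dist ((n:ℝ)⁻¹ * C n x) lam} < ENNReal.ofReal (ε' / Kr) := by
    obtain ⟨n, ha, hb⟩ := ((h2.eventually (Iio_mem_nhds hofr)).and (eventually_ge_atTop 1)).exists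
    exact ⟨n, hb, ha⟩
  refine ⟨n, hn1, ?_⟩
  have hnR : (1:ℝ) ≤ (n:ℝ) := by exact_mod_cast hn1
  have hnne : (n:ℝ) ≠ 0 := by linarith
  have hninv : (0:ℝ) ≤ (n:ℝ)⁻¹ := by positivity
  set E := {x | ε' ≤ dist ((n:ℝ)⁻¹ * C n x) lam} with hE
  have hEmeas : MeasurableSet E := by
    have hd : Measurable fun x => dist ((n:ℝ)⁻¹ * C n x) lam :=
      ((hCm n).const_mul _).dist measurable_const
    exact measurableSet_le measurable_const hd
  -- integrability
  have hcomp : ∀ k : ℕ, Integrable (fun x => ψ (f^[k] x)) μ := by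
    intro k
    have hmp := hf.iterate k
    have h3 : Integrable ψ (Measure.map f^[k] μ) := by rw [hmp.map_eq]; exact hψi
    exact (integrable_map_measure hψm.aestronglyMeasurable hmp.measurable.aemeasurable).1 h3
  have hSint : Integrable (fun x => ∑ k ∈ Finset.range n, ψ (f^[k] x)) μ :=
    integrable_finset_sum _ (fun k _ => hcomp k)
  have hCint : Integrable (C n) μ := by
    refine hSint.mono' (hCm n).aestronglyMeasurable (Eventually.of_forall fun x => ?_)
    rw [Real.norm_eq_abs, abs_of_nonneg (hC0 n x)]
    exact hCB n x
  have hgk : ∀ k : ℕ, Integrable (fun x => max (ψ (f^[k] x) - Kr) 0) μ := by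
    intro k
    refine (hcomp k).mono'
      (((hψm.comp (hf.measurable.iterate k)).sub measurable_const).max
        measurable_const).aestronglyMeasurable (Eventually.of_forall fun x => ?_)
    rw [Real.norm_eq_abs, abs_of_nonneg (le_max_right _ _)]
    refine max_le ?_ (hψ0 _)
    linarith [hψ0 (f^[k] x)]
  have hGint : Integrable (fun x => (n:ℝ)⁻¹ * ∑ k ∈ Finset.range n, max (ψ (f^[k] x) - Kr) 0) μ :=
    (integrable_finset_sum _ (fun k _ => hgk k)).const_mul _
  have hIndint : Integrable (E.indicator (fun _ => Kr)) μ := (integrable_const Kr).indicator hEmeas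
  have hIndGint : Integrable (fun x => E.indicator (fun _ => Kr) x +
      (n:ℝ)⁻¹ * ∑ k ∈ Finset.range n, max (ψ (f^[k] x) - Kr) 0) μ := hIndint.add hGint
  have hRHSint : Integrable (fun x => (lam + ε') + (E.indicator (fun _ => Kr) x +
      (n:ℝ)⁻¹ * ∑ k ∈ Finset.range n, max (ψ (f^[k] x) - Kr) 0)) μ :=
    (integrable_const _).add hIndGint
  -- pointwise bound
  have hpt : ∀ x, (n:ℝ)⁻¹ * C n x ≤ (lam + ε') + (E.indicator (fun _ => Kr) x +
      (n:ℝ)⁻¹ * ∑ k ∈ Finset.range n, max (ψ (f^[k] x) - Kr) 0) := by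
    intro x
    have hsum0 : 0 ≤ ∑ k ∈ Finset.range n, max (ψ (f^[k] x) - Kr) 0 :=
      Finset.sum_nonneg fun k _ => le_max_right _ _
    have h8 : 0 ≤ (n:ℝ)⁻¹ * ∑ k ∈ Finset.range n, max (ψ (f^[k] x) - Kr) 0 :=
      mul_nonneg hninv hsum0
    by_cases hx : x ∈ E
    · have h5 : C n x ≤ ∑ k ∈ Finset.range n, (Kr + max (ψ (f^[k] x) - Kr) 0) := by
        refine (hCB n x).trans (Finset.sum_le_sum fun k _ => ?_)
        have := le_max_left (ψ (f^[k] x) - Kr) 0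
        linarith
      have h5' : C n x ≤ (n:ℝ) * Kr + ∑ k ∈ Finset.range n, max (ψ (f^[k] x) - Kr) 0 := by
        refine h5.trans (le_of_eq ?_)
        rw [Finset.sum_add_distrib, Finset.sum_const, Finset.card_range, nsmul_eq_mul]
      have h6 : (n:ℝ)⁻¹ * C n x ≤
          (n:ℝ)⁻¹ * ((n:ℝ) * Kr + ∑ k ∈ Finset.range n, max (ψ (f^[k] x) - Kr) 0) :=
        mul_le_mul_of_nonneg_left h5' hninv
      rw [mul_add, ← mul_assoc, inv_mul_cancel₀ hnne, one_mul] at h6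
      rw [Set.indicator_of_mem hx]
      linarith
    · rw [Set.indicator_of_notMem hx]
      have hd : dist ((n:ℝ)⁻¹ * C n x) lam < ε' := not_le.1 hx
      rw [Real.dist_eq] at hd
      have := le_abs_self ((n:ℝ)⁻¹ * C n x - lam)
      linarith
  have hint1 : Integrable (fun x => (n:ℝ)⁻¹ * C n x) μ := hCint.const_mul _
  have hmono := integral_mono hint1 hRHSint hpt
  -- compute RHS integral
  have hshift : ∀ k : ℕ, ∫ x, max (ψ (f^[k] x) - Kr) 0 ∂μ = ∫ x, max (ψ x - Kr) 0 ∂μ := by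
    intro k
    have hmp := hf.iterate k
    have hasm : AEStronglyMeasurable (fun y => max (ψ y - Kr) 0) (Measure.map f^[k] μ) := by
      rw [hmp.map_eq]
      exact ((hψm.sub measurable_const).max measurable_const).aestronglyMeasurable
    have h9 := integral_map hmp.measurable.aemeasurable hasm
    rw [hmp.map_eq] at h9
    exact h9.symm
  have hRHSeq : ∫ x, ((lam + ε') + (E.indicator (fun _ => Kr) x +
      (n:ℝ)⁻¹ * ∑ k ∈ Finset.range n, max (ψ (f^[k] x) - Kr) 0)) ∂μ =
      (lam + ε') + ((μ E).toReal * Kr +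
        (n:ℝ)⁻¹ * ((n:ℝ) * ∫ x, max (ψ x - Kr) 0 ∂μ)) := by
    rw [integral_add (integrable_const _) hIndGint, integral_const,
      integral_add hIndint hGint, integral_indicator_const Kr hEmeas, integral_const_mul _ _,
      integral_finset_sum _ (fun k _ => hgk k)]
    have hsums : ∑ k ∈ Finset.range n, ∫ x, max (ψ (f^[k] x) - Kr) 0 ∂μ =
        (n:ℝ) * ∫ x, max (ψ x - Kr) 0 ∂μ := by
      rw [Finset.sum_congr rfl (fun k _ => hshift k), Finset.sum_const, Finset.card_range,
        nsmul_eq_mul]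
    rw [hsums]
    simp [measure_univ, smul_eq_mul, Measure.real]
  rw [hRHSeq] at hmono
  rw [integral_const_mul] at hmono
  -- final numeric estimates
  have hmuE : (μ E).toReal ≤ ε' / Kr := by
    have hle : μ E ≤ ENNReal.ofReal (ε' / Kr) := le_of_lt hnm
    have h10 := ENNReal.toReal_mono ENNReal.ofReal_ne_top hle
    rwa [ENNReal.toReal_ofReal (by positivity)] at h10
  have hmuE2 : (μ E).toReal * Kr ≤ ε' := by
    have := mul_le_mul_of_nonneg_right hmuE (le_of_lt hKpos)
    rwa [div_mul_cancel₀ _ (ne_of_gt hKpos)] at this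
  have hintmax : (n:ℝ)⁻¹ * ((n:ℝ) * ∫ x, max (ψ x - Kr) 0 ∂μ) ≤ ε' := by
    rw [← mul_assoc, inv_mul_cancel₀ hnne, one_mul]
    exact le_of_lt hKe
  calc (n:ℝ)⁻¹ * ∫ x, C n x ∂μ ≤ _ := hmono
    _ ≤ (lam + ε') + (ε' + ε') := by
        have := add_le_add hmuE2 hintmax
        linarith
    _ = lam + ε := by rw [hε'def]; ring

end Avg

/-- For measurable `A : M → SL(2,ℝ)` over an ergodic `(f,μ)` with
`log‖A‖` integrable and Lyapunov exponent `λ(A)` (the a.e. limit of both `(1/n)log‖Aⁿ(x)‖`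
and `(1/n)log‖Aⁿ(x)⁻¹‖`), every `F_A`-invariant probability measure `m` on `M × ℝP¹`
projecting to `μ` satisfies `−λ(A) ≤ ∫ φ_A dm ≤ λ(A)`. -/
theorem integral_phi_bounds {M : Type*} [MeasurableSpace M]
    (μ : Measure M) [IsProbabilityMeasure μ] (f : M → M) (hf : Ergodic f μ)
    (A : M → SL2) (hA : Measurable fun x => sl2CLM (A x))
    (hint : Integrable (fun x => Real.log ‖sl2CLM (A x)‖) μ)
    (lamA : ℝ)
    (hlam : ∀ᵐ x ∂μ, Tendsto
      (fun n : ℕ => (n : ℝ)⁻¹ * Real.log ‖sl2CLM (sl2Cocycle f A n x)‖) atTop (𝓝 lamA))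
    (hlaminv : ∀ᵐ x ∂μ, Tendsto
      (fun n : ℕ => (n : ℝ)⁻¹ * Real.log ‖sl2CLM (sl2Cocycle f A n x)⁻¹‖) atTop (𝓝 lamA))
    (m : Measure (M × RP1)) [IsProbabilityMeasure m]
    (hproj : m.map Prod.fst = μ) (hminv : m.map (projCocycle f A) = m) :
    -lamA ≤ ∫ p, phiA A p ∂m ∧ ∫ p, phiA A p ∂m ≤ lamA := by
  
  have hfm : Measurable f := hf.toMeasurePreserving.measurable
  have hFmeas : Measurable (projCocycle f A) := measurable_projCocycle hfm hA
  have hmp : MeasurePreserving (projCocycle f A) m m := ⟨hFmeas, hminv⟩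
  have hphim : Measurable (phiA A) := measurable_phiA hA
  set ψ : M → ℝ := fun x => Real.log ‖sl2CLM (A x)‖ with hψdef
  have hψm : Measurable ψ := hA.norm.log
  have hψ0 : ∀ x, 0 ≤ ψ x := fun x => log_norm_sl2CLM_nonneg (A x)
  -- integrability of functions of the first coordinate
  have hfst : ∀ g : M → ℝ, Measurable g → Integrable g μ →
      Integrable (fun p : M × RP1 => g p.1) m ∧ ∫ p, g p.1 ∂m = ∫ x, g x ∂μ := by
    intro g hgm hgi
    have h1 : Integrable g (m.map Prod.fst) := by rw [hproj]; exact hgi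
    have h2 := (integrable_map_measure
      (by rw [hproj]; exact hgm.aestronglyMeasurable) measurable_fst.aemeasurable).1 h1
    have h3 := integral_map (measurable_fst.aemeasurable (μ := m))
      (f := g) (by rw [hproj]; exact hgm.aestronglyMeasurable)
    rw [hproj] at h3
    exact ⟨by simpa [Function.comp_def] using h2, h3.symm⟩
  -- φ_A is integrable w.r.t. m
  have hphibound : ∀ p : M × RP1, |phiA A p| ≤ ψ p.1 := fun p =>
    abs_log_ratio_le (A p.1) (Projectivization.rep_nonzero p.2)
  have hphint : Integrable (phiA A) m := by
    refine (hfst ψ hψm hint).1.mono' hphim.aestronglyMeasurable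
      (Eventually.of_forall fun p => ?_)
    rw [Real.norm_eq_abs]
    exact hphibound p
  -- Birkhoff sums integrate to n ∫ φ
  have hcompint : ∀ k : ℕ, Integrable (fun p => phiA A ((projCocycle f A)^[k] p)) m := by
    intro k
    have hk := hmp.iterate k
    have h1 : Integrable (phiA A) (m.map (projCocycle f A)^[k]) := by
      rw [hk.map_eq]; exact hphint
    have h2 := (integrable_map_measure
      (by rw [hk.map_eq]; exact hphim.aestronglyMeasurable) hk.measurable.aemeasurable).1 h1
    simpa [Function.comp_def] using h2
  have hcompeq : ∀ k : ℕ, ∫ p, phiA A ((projCocycle f A)^[k] p) ∂m = ∫ p, phiA A p ∂m := by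
    intro k
    have hk := hmp.iterate k
    have h9 := integral_map hk.measurable.aemeasurable
      (f := phiA A) (by rw [hk.map_eq]; exact hphim.aestronglyMeasurable)
    rw [hk.map_eq] at h9
    exact h9.symm
  have hsum : ∀ n : ℕ,
      ∫ p, (∑ k ∈ Finset.range n, phiA A ((projCocycle f A)^[k] p)) ∂m =
        (n:ℝ) * ∫ p, phiA A p ∂m := by
    intro n
    rw [integral_finset_sum _ (fun k _ => hcompint k),
      Finset.sum_congr rfl fun k _ => hcompeq k, Finset.sum_const, Finset.card_range,
      nsmul_eq_mul]
  -- the upper functions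
  set Cfun : ℕ → M → ℝ := fun n x => Real.log ‖sl2CLM (sl2Cocycle f A n x)‖ with hCdef
  have hCm : ∀ n, Measurable (Cfun n) := fun n => (measurable_cocycleCLM hfm hA n).norm.log
  have hC0 : ∀ n x, 0 ≤ Cfun n x := fun n x => log_norm_sl2CLM_nonneg _
  have hCB : ∀ n x, Cfun n x ≤ ∑ k ∈ Finset.range n, ψ (f^[k] x) := fun n x =>
    log_norm_cocycle_le f A n x
  have hCint : ∀ n, Integrable (Cfun n) μ := by
    intro n
    have hSint : Integrable (fun x => ∑ k ∈ Finset.range n, ψ (f^[k] x)) μ := by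
      refine integrable_finset_sum _ (fun k _ => ?_)
      have hk := hf.toMeasurePreserving.iterate k
      have h1 : Integrable ψ (Measure.map f^[k] μ) := by rw [hk.map_eq]; exact hint
      have h2 := (integrable_map_measure
        (by rw [hk.map_eq]; exact hψm.aestronglyMeasurable) hk.measurable.aemeasurable).1 h1
      simpa [Function.comp_def] using h2
    refine hSint.mono' (hCm n).aestronglyMeasurable (Eventually.of_forall fun x => ?_)
    rw [Real.norm_eq_abs, abs_of_nonneg (hC0 n x)]
    exact hCB n x
  -- λ(A) is nonnegative
  have hlam0 : 0 ≤ lamA := by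
    obtain ⟨x₀, hx₀⟩ := hlam.exists
    refine ge_of_tendsto' hx₀ fun n => ?_
    exact mul_nonneg (by positivity) (hC0 n x₀)
  -- key inequalities for each n ≥ 1
  have hkey : ∀ n : ℕ, 0 < n →
      ∫ p, phiA A p ∂m ≤ (n:ℝ)⁻¹ * ∫ x, Cfun n x ∂μ ∧
      -((n:ℝ)⁻¹ * ∫ x, Cfun n x ∂μ) ≤ ∫ p, phiA A p ∂m := by
    intro n hn
    have hnR : (0:ℝ) < (n:ℝ) := by exact_mod_cast hn
    have hCfst := hfst (Cfun n) (hCm n) (hCint n)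
    have hSint : Integrable (fun p : M × RP1 =>
        ∑ k ∈ Finset.range n, phiA A ((projCocycle f A)^[k] p)) m :=
      integrable_finset_sum _ (fun k _ => hcompint k)
    -- upper pointwise bound
    have hup : ∀ p : M × RP1,
        ∑ k ∈ Finset.range n, phiA A ((projCocycle f A)^[k] p) ≤ Cfun n p.1 := by
      intro p
      have hbk := birkhoff_sum_phiA f A n p.1 p.2
      rw [show ((p.1, p.2) : M × RP1) = p from rfl] at hbk
      rw [hbk]
      exact log_ratio_le _ (Projectivization.rep_nonzero p.2)
    have hlo : ∀ p : M × RP1,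
        -(Cfun n p.1) ≤ ∑ k ∈ Finset.range n, phiA A ((projCocycle f A)^[k] p) := by
      intro p
      have hbk := birkhoff_sum_phiA f A n p.1 p.2
      rw [show ((p.1, p.2) : M × RP1) = p from rfl] at hbk
      rw [hbk]
      have h1 := neg_log_le_log_ratio (sl2Cocycle f A n p.1)
        (Projectivization.rep_nonzero p.2)
      rwa [norm_sl2CLM_inv] at h1
    constructor
    · have h1 : (n:ℝ) * ∫ p, phiA A p ∂m ≤ ∫ x, Cfun n x ∂μ := by
        rw [← hsum n, ← hCfst.2]
        exact integral_mono hSint hCfst.1 hup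
      rw [le_inv_mul_iff₀ hnR] -- (∫ φ ≤ n⁻¹ * c ↔ n * ∫φ ≤ c)?
      exact h1
    · have hneg : ∀ p : M × RP1,
          -(∑ k ∈ Finset.range n, phiA A ((projCocycle f A)^[k] p)) ≤ Cfun n p.1 := by
        intro p
        have := hlo p
        linarith
      have h2 : ∫ p, -(∑ k ∈ Finset.range n, phiA A ((projCocycle f A)^[k] p)) ∂m ≤
          ∫ p, Cfun n p.1 ∂m := integral_mono hSint.neg hCfst.1 hneg
      rw [integral_neg, hsum n, hCfst.2] at h2
      have h3 := mul_le_mul_of_nonneg_left h2 (inv_nonneg.2 hnR.le)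
      rw [mul_neg, ← mul_assoc, inv_mul_cancel₀ (ne_of_gt hnR), one_mul] at h3
      linarith
  -- conclude via avg_bound
  have hε : ∀ ε : ℝ, 0 < ε → ∫ p, phiA A p ∂m ≤ lamA + ε ∧ -∫ p, phiA A p ∂m ≤ lamA + ε := by
    intro ε hε
    obtain ⟨n, hn, hb⟩ := avg_bound μ hf.toMeasurePreserving hψm hint hψ0 hCm hC0 hCB
      hlam0 hlam hε
    obtain ⟨h1, h2⟩ := hkey n hn
    exact ⟨h1.trans hb, by linarith⟩
  constructor
  · rw [neg_le]
    refine le_of_forall_pos_le_add fun ε hε' => ?_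
    exact (hε ε hε').2
  · refine le_of_forall_pos_le_add fun ε hε' => ?_
    exact (hε ε hε').1
end
end

section
/- In the setting of the previous statement, for each point x̂ = (x_{-n})_n of the natural extension M̂ of f, the sets D_n(x̂) = g^n({x_{-n}} × D) form a nested sequence of subsets of {x_0} × D whose fibers are balls of radius λⁿ; their intersection is a single point ι(x̂), and the resulting map ι : M̂ → M × D is injective, continuous, satisfies g ∘ ι = ι ∘ f̂, and g(ι(M̂)) = ι(M̂). -/
open MeasureTheory Set Filter Topology

/-- The natural extension (inverse limit) of `f : M → M`: sequences `(x_{-n})_{n ≥ 0}` with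
`f(x_{-(n+1)}) = x_{-n}`, where `x n` records `x_{-n}`. -/
def NatExt {M : Type*} (f : M → M) : Type _ := {x : ℕ → M // ∀ n, f (x (n + 1)) = x n}

/-- The shift map `f̂` on the natural extension: `(…, x_{-1}, x_0) ↦ (…, x_{-1}, x_0, f(x_0))`. -/
def natExtShift {M : Type*} (f : M → M) : NatExt f → NatExt f := fun x =>
  ⟨fun n => Nat.rec (f (x.1 0)) (fun k _ => x.1 k) n, by
    intro n
    cases n with
    | zero => rfl
    | succ k => exact x.2 k⟩

/-- The canonical projection `π : M̂ → M`, `xh ↦ x_0`. -/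
def natExtProj {M : Type*} (f : M → M) : NatExt f → M := fun x => x.1 0

instance {M : Type*} [TopologicalSpace M] (f : M → M) : TopologicalSpace (NatExt f) :=
  inferInstanceAs (TopologicalSpace {x : ℕ → M // ∀ n, f (x (n + 1)) = x n})

instance {M : Type*} [MeasurableSpace M] (f : M → M) : MeasurableSpace (NatExt f) :=
  inferInstanceAs (MeasurableSpace {x : ℕ → M // ∀ n, f (x (n + 1)) = x n})

open Metric

set_option linter.unusedSectionVars false
namespace S15

variable {N : ℕ} {M : Type*} [MetricSpace M]

noncomputable def cmap (h : M → EuclideanSpace ℝ (Fin N)) (m : M) : EuclideanSpace ℝ (Fin N) :=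
  (2 * (N : ℝ))⁻¹ • h m

def tail (f : M → M) (n : ℕ) (x : NatExt f) : NatExt f :=
  ⟨fun j => x.1 (n + j), fun j => x.2 (n + j)⟩

noncomputable def vm (h : M → EuclideanSpace ℝ (Fin N)) (f : M → M) (lam : ℝ) (x : NatExt f) :
    EuclideanSpace ℝ (Fin N) := ∑' j : ℕ, lam ^ j • cmap h (x.1 (j + 1))

noncomputable def bsum (h : M → EuclideanSpace ℝ (Fin N)) (f : M → M) (lam : ℝ) (x : NatExt f)
    (n : ℕ) : EuclideanSpace ℝ (Fin N) := ∑ j ∈ Finset.range n, lam ^ j • cmap h (x.1 (j + 1))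

lemma norm_cmap_le (hN : 0 < N) (h : M → EuclideanSpace ℝ (Fin N))
    (hrange : ∀ x i, h x i ∈ Set.Icc (0:ℝ) 1) (m : M) : ‖cmap h m‖ ≤ 1 / 2 := by
  have hN1 : (1:ℝ) ≤ N := by exact_mod_cast hN
  have hnorm : ‖h m‖ ≤ N := by
    have h1 : ‖h m‖ ≤ Real.sqrt N := by
      rw [EuclideanSpace.norm_eq]
      apply Real.sqrt_le_sqrt
      have hb : ∀ i : Fin N, ‖h m i‖ ^ 2 ≤ 1 := by
        intro i
        have := hrange m i
        rw [Real.norm_eq_abs, sq_abs]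
        nlinarith [this.1, this.2]
      calc ∑ i, ‖h m i‖ ^ 2 ≤ ∑ _i : Fin N, (1:ℝ) := Finset.sum_le_sum fun i _ => hb i
        _ = N := by simp
    have h2 : Real.sqrt N ≤ N := by
      nlinarith [Real.sq_sqrt (by positivity : (0:ℝ) ≤ (N:ℝ)), Real.sqrt_nonneg (N:ℝ)]
    linarith
  have h2N : (0:ℝ) < 2 * N := by positivity
  rw [cmap, norm_smul, Real.norm_eq_abs, abs_inv, abs_of_pos h2N]
  calc (2 * (N:ℝ))⁻¹ * ‖h m‖ ≤ (2 * (N:ℝ))⁻¹ * N := by gcongr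
    _ = 1 / 2 := by field_simp

variable {h : M → EuclideanSpace ℝ (Fin N)} {f : M → M} {lam : ℝ}

lemma summable_aux (hN : 0 < N) (hrange : ∀ x i, h x i ∈ Set.Icc (0:ℝ) 1)
    (h0 : 0 ≤ lam) (h1 : lam < 1) (m : ℕ → M) :
    Summable fun j => lam ^ j • cmap h (m j) := by
  apply Summable.of_norm_bounded
    ((summable_geometric_of_lt_one h0 h1).mul_left (1/2))
  intro j
  rw [norm_smul, norm_pow, Real.norm_eq_abs, abs_of_nonneg h0, mul_comm]
  exact mul_le_mul_of_nonneg_right (norm_cmap_le hN h hrange (m j)) (pow_nonneg h0 j)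

lemma tsum_norm_lt_one (hN : 0 < N) (hrange : ∀ x i, h x i ∈ Set.Icc (0:ℝ) 1)
    (h0 : 0 ≤ lam) (h2 : lam < 1/2) (m : ℕ → M) :
    ‖∑' j : ℕ, lam ^ j • cmap h (m j)‖ < 1 := by
  have h1 : lam < 1 := by linarith
  have hb : ‖∑' j : ℕ, lam ^ j • cmap h (m j)‖ ≤ (1/2) * (1 - lam)⁻¹ := by
    apply tsum_of_norm_bounded ((hasSum_geometric_of_lt_one h0 h1).mul_left (1/2))
    intro j
    rw [norm_smul, norm_pow, Real.norm_eq_abs, abs_of_nonneg h0, mul_comm]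
    exact mul_le_mul_of_nonneg_right (norm_cmap_le hN h hrange (m j)) (pow_nonneg h0 j)
  have h4 : (0:ℝ) < 1 - lam := by linarith
  have : (1/2 : ℝ) * (1 - lam)⁻¹ < 1 := by
    rw [inv_eq_one_div, mul_one_div, div_lt_one h4]; linarith
  linarith

lemma vm_norm_lt (hN : 0 < N) (hrange : ∀ x i, h x i ∈ Set.Icc (0:ℝ) 1)
    (h0 : 0 ≤ lam) (h2 : lam < 1/2) (x : NatExt f) : ‖vm h f lam x‖ < 1 :=
  tsum_norm_lt_one hN hrange h0 h2 _

lemma vm_split (hN : 0 < N) (hrange : ∀ x i, h x i ∈ Set.Icc (0:ℝ) 1)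
    (h0 : 0 ≤ lam) (h1 : lam < 1) (x : NatExt f) (n : ℕ) :
    vm h f lam x = bsum h f lam x n + lam ^ n • vm h f lam (tail f n x) := by
  have hs := summable_aux hN hrange h0 h1 (fun j => x.1 (j + 1))
  rw [vm, ← Summable.sum_add_tsum_nat_add n hs, bsum]
  congr 1
  have : ∀ j : ℕ, lam ^ (j + n) • cmap h (x.1 (j + n + 1))
      = lam ^ n • (lam ^ j • cmap h ((tail f n x).1 (j + 1))) := by
    intro j
    rw [smul_smul, ← pow_add]
    show lam ^ (j + n) • cmap h (x.1 (j + n + 1)) = lam ^ (n + j) • cmap h (x.1 (n + (j + 1)))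
    have e1 : n + j = j + n := Nat.add_comm n j
    have e2 : n + (j + 1) = j + n + 1 := by omega
    rw [e1, e2]
  rw [tsum_congr this, Summable.tsum_const_smul]
  · rfl
  · exact (summable_aux hN hrange h0 h1 _)

lemma bsum_bound (hN : 0 < N) (hrange : ∀ x i, h x i ∈ Set.Icc (0:ℝ) 1)
    (h0 : 0 ≤ lam) (h2 : lam ≤ 1/2) (x : NatExt f) :
    ∀ n : ℕ, ‖bsum h f lam x n‖ + lam ^ n ≤ 1 := by
  intro n
  induction n with
  | zero => simp [bsum]
  | succ n ih =>
    have hp : (0:ℝ) ≤ lam ^ n := pow_nonneg h0 n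
    have hb : ‖bsum h f lam x (n+1)‖ ≤ ‖bsum h f lam x n‖ + (1/2) * lam ^ n := by
      rw [bsum, Finset.sum_range_succ]
      refine (norm_add_le _ _).trans ?_
      gcongr
      · rfl
      · rw [norm_smul, norm_pow, Real.norm_eq_abs, abs_of_nonneg h0, mul_comm]
        exact mul_le_mul_of_nonneg_right (norm_cmap_le hN h hrange _) hp
    have : lam ^ (n+1) ≤ (1/2) * lam ^ n := by
      rw [pow_succ, mul_comm]
      exact mul_le_mul_of_nonneg_right h2 hp
    nlinarith

lemma iter_eq (x : NatExt f) (n : ℕ) (w : EuclideanSpace ℝ (Fin N)) :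
    (fun p : M × EuclideanSpace ℝ (Fin N) =>
        (f p.1, (2 * (N : ℝ))⁻¹ • h p.1 + lam • p.2))^[n] (x.1 n, w)
      = (x.1 0, bsum h f lam x n + lam ^ n • w) := by
  induction n generalizing w with
  | zero => simp [bsum]
  | succ n ih =>
    rw [Function.iterate_succ_apply]
    have e1 : f (x.1 (n+1)) = x.1 n := x.2 n
    show (fun p : M × EuclideanSpace ℝ (Fin N) =>
        (f p.1, (2 * (N : ℝ))⁻¹ • h p.1 + lam • p.2))^[n]
        (f (x.1 (n+1)), cmap h (x.1 (n+1)) + lam • w) = _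
    rw [e1, ih]
    refine Prod.ext rfl ?_
    show bsum h f lam x n + lam ^ n • (cmap h (x.1 (n+1)) + lam • w)
      = bsum h f lam x (n+1) + lam ^ (n+1) • w
    rw [bsum, bsum, Finset.sum_range_succ, smul_add, smul_smul, ← pow_succ]
    abel

lemma image_eq (hlam0 : 0 < lam) (x : NatExt f) (n : ℕ) :
    (fun p : M × EuclideanSpace ℝ (Fin N) =>
        (f p.1, (2 * (N : ℝ))⁻¹ • h p.1 + lam • p.2))^[n] ''
        ((Set.singleton (x.1 n)) ×ˢ ball (0 : EuclideanSpace ℝ (Fin N)) 1)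
      = (Set.singleton (x.1 0)) ×ˢ ball (bsum h f lam x n) (lam ^ n) := by
  have hln : (0:ℝ) < lam ^ n := pow_pos hlam0 n
  ext ⟨m, w⟩
  simp only [Set.mem_image, Set.mem_prod, Set.mem_singleton_iff, mem_ball]
  constructor
  · rintro ⟨⟨m', w'⟩, ⟨hm', hw'⟩, heq⟩
    subst hm'
    rw [iter_eq] at heq
    have h1 : x.1 0 = m := congrArg Prod.fst heq
    have h2 : bsum h f lam x n + lam ^ n • w' = w := congrArg Prod.snd heq
    refine ⟨h1.symm, ?_⟩
    have hw'' : ‖w'‖ < 1 := by simpa [dist_zero_right] using hw'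
    rw [← h2, dist_eq_norm, add_sub_cancel_left, norm_smul, norm_pow, Real.norm_eq_abs,
      abs_of_nonneg hlam0.le]
    exact (mul_lt_iff_lt_one_right hln).mpr hw''
  · rintro ⟨rfl, hw⟩
    refine ⟨(x.1 n, (lam ^ n)⁻¹ • (w - bsum h f lam x n)), ⟨rfl, ?_⟩, ?_⟩
    · show dist ((lam ^ n)⁻¹ • (w - bsum h f lam x n)) 0 < 1
      rw [dist_zero_right, norm_smul, Real.norm_eq_abs, abs_inv, abs_of_pos hln,
        ← dist_eq_norm]
      rw [inv_mul_lt_iff₀ hln, mul_one]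
      exact hw
    · rw [iter_eq, smul_inv_smul₀ (ne_of_gt hln)]
      simp

lemma norm_term_le (hN : 0 < N) (hrange : ∀ x i, h x i ∈ Set.Icc (0:ℝ) 1)
    (h0 : 0 ≤ lam) (j : ℕ) (m : M) : ‖lam ^ j • cmap h m‖ ≤ (1/2) * lam ^ j := by
  rw [norm_smul, norm_pow, Real.norm_eq_abs, abs_of_nonneg h0, mul_comm]
  exact mul_le_mul_of_nonneg_right (norm_cmap_le hN h hrange m) (pow_nonneg h0 j)

end S15


set_option maxHeartbeats 1000000 in
/-- In the setting of the previous statement (with `λ ∈ (0, 1/2)`), for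
each point `xh = (x_{-n})_n` of the natural extension `M̂` of `f`, the sets
`D_n(xh) = gⁿ({x_{-n}} × D)` form a nested sequence of subsets of `{x_0} × D` whose fibers
are balls of radius `λⁿ`; their intersection is a single point `ι(xh)`, and the resulting
map `ι : M̂ → M × D` is injective, continuous, satisfies `g ∘ ι = ι ∘ f̂` and
`g(ι(M̂)) = ι(M̂)`. -/
theorem natExt_smooth_realization {N : ℕ} (hN : 0 < N)
    {M : Type*} [MetricSpace M] [CompactSpace M]
    (f : M → M) (hf : Continuous f)
    (hloc : ∀ x : M, ∃ U ∈ nhds x, Set.InjOn f U)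
    (h : M → EuclideanSpace ℝ (Fin N)) (hh : Continuous h)
    (hrange : ∀ x i, h x i ∈ Set.Icc (0 : ℝ) 1)
    (δ : ℝ) (hδ : 0 < δ)
    (hsep : ∀ x y : M, x ≠ y → f x = f y → δ ≤ ‖h x - h y‖)
    (lam : ℝ) (hlam0 : 0 < lam) (hlam : lam < δ / (4 * N)) (hlam2 : lam < 1 / 2) :
    ∀ (g : M × EuclideanSpace ℝ (Fin N) → M × EuclideanSpace ℝ (Fin N)),
      (g = fun p => (f p.1, (2 * (N : ℝ))⁻¹ • h p.1 + lam • p.2)) →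
      ∀ (D : Set (EuclideanSpace ℝ (Fin N))), D = ball 0 1 →
      ∃ ι : NatExt f → M × EuclideanSpace ℝ (Fin N),
        Continuous ι ∧ Function.Injective ι ∧
        (∀ xh : NatExt f, g (ι xh) = ι (natExtShift f xh)) ∧
        (g '' Set.range ι = Set.range ι) ∧
        ∀ xh : NatExt f,
          -- the `D_n(xh)` are subsets of `{x₀} × D`, nested, with fibers balls of radius `λⁿ`:
          (∀ n : ℕ, g^[n] '' ((Set.singleton (xh.1 n)) ×ˢ D) ⊆ (Set.singleton (xh.1 0)) ×ˢ D) ∧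
          (∀ n : ℕ, g^[n + 1] '' ((Set.singleton (xh.1 (n + 1))) ×ˢ D) ⊆ g^[n] '' ((Set.singleton (xh.1 n)) ×ˢ D)) ∧
          (∀ n : ℕ, ∃ c : EuclideanSpace ℝ (Fin N),
            Prod.snd '' (g^[n] '' ((Set.singleton (xh.1 n)) ×ˢ D)) = ball c (lam ^ n)) ∧
          -- and their intersection is the single point `ι(xh)`:
          (⋂ n : ℕ, g^[n] '' ((Set.singleton (xh.1 n)) ×ˢ D)) = {ι xh} := by
  intro g hg D hD
  subst hg; subst hD
  have h0 : 0 ≤ lam := hlam0.le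
  have h1 : lam < 1 := by linarith
  have hNR : (0:ℝ) < (N:ℝ) := by exact_mod_cast hN
  set G : M × EuclideanSpace ℝ (Fin N) → M × EuclideanSpace ℝ (Fin N) :=
    fun p => (f p.1, (2 * (N : ℝ))⁻¹ • h p.1 + lam • p.2) with hG
  set ι : NatExt f → M × EuclideanSpace ℝ (Fin N) :=
    fun x => (x.1 0, S15.vm h f lam x) with hι
  -- membership of the limit point in each ball
  have hmem : ∀ (x : NatExt f) (n : ℕ),
      dist (S15.vm h f lam x) (S15.bsum h f lam x n) < lam ^ n := by
    intro x n
    rw [dist_eq_norm]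
    nth_rewrite 1 [S15.vm_split hN hrange h0 h1 x n]
    rw [add_sub_cancel_left, norm_smul, norm_pow, Real.norm_eq_abs, abs_of_nonneg h0]
    exact (mul_lt_iff_lt_one_right (pow_pos hlam0 n)).mpr (S15.vm_norm_lt hN hrange h0 hlam2 _)
  -- continuity
  have hcont : Continuous ι := by
    rw [hι]
    apply Continuous.prodMk
    · exact (continuous_apply 0).comp continuous_subtype_val
    · show Continuous fun x : NatExt f => ∑' j : ℕ, lam ^ j • S15.cmap h (x.1 (j + 1))
      refine continuous_tsum ?_ ((summable_geometric_of_lt_one h0 h1).mul_left (1/2)) ?_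
      · intro j
        exact (Continuous.const_smul (hh.comp
          ((continuous_apply (j+1) : Continuous fun p : ℕ → M => p (j+1)).comp continuous_subtype_val)) (2 * (N:ℝ))⁻¹).const_smul (lam ^ j)
      · intro j x
        exact S15.norm_term_le hN hrange h0 j _
  -- equivariance
  have hequi : ∀ x : NatExt f, G (ι x) = ι (natExtShift f x) := by
    intro x
    refine Prod.ext rfl ?_
    show (2 * (N : ℝ))⁻¹ • h (x.1 0) + lam • S15.vm h f lam x
        = S15.vm h f lam (natExtShift f x)
    have e : S15.vm h f lam (natExtShift f x) = ∑' j : ℕ, lam ^ j • S15.cmap h (x.1 j) := rfl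
    rw [e, Summable.tsum_eq_zero_add (S15.summable_aux hN hrange h0 h1 (fun j => x.1 j))]
    congr 1
    · show (2 * (N : ℝ))⁻¹ • h (x.1 0) = lam ^ 0 • S15.cmap h (x.1 0)
      simp [S15.cmap]
    · have e2 : ∀ j : ℕ, lam ^ (j + 1) • S15.cmap h (x.1 (j + 1))
          = lam • (lam ^ j • S15.cmap h (x.1 (j + 1))) := by
        intro j
        rw [smul_smul, ← pow_succ']
      rw [tsum_congr e2, Summable.tsum_const_smul]
      · rfl
      · exact S15.summable_aux hN hrange h0 h1 _
  -- injectivity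
  have hinj : Function.Injective ι := by
    intro x y hxy
    have h10 : x.1 0 = y.1 0 := congrArg Prod.fst hxy
    have hveq : S15.vm h f lam x = S15.vm h f lam y := congrArg Prod.snd hxy
    have key : ∀ n, (∀ m, m < n → x.1 m = y.1 m) → x.1 n = y.1 n := by
      intro n
      match n with
      | 0 => exact fun _ => h10
      | (k+1) =>
        intro hm
        by_contra hne
        set d : ℕ → EuclideanSpace ℝ (Fin N) :=
          fun j => lam ^ j • (S15.cmap h (x.1 (j+1)) - S15.cmap h (y.1 (j+1))) with hd
        have hdx := S15.summable_aux (h := h) hN hrange h0 h1 (fun j => x.1 (j+1))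
        have hdy := S15.summable_aux (h := h) hN hrange h0 h1 (fun j => y.1 (j+1))
        have hdeq : d = fun j => lam ^ j • S15.cmap h (x.1 (j+1))
            - lam ^ j • S15.cmap h (y.1 (j+1)) := by
          funext j; exact smul_sub _ _ _
        have hds : Summable d := by rw [hdeq]; exact hdx.sub hdy
        have htsum : ∑' j, d j = 0 := by
          have e : ∑' j, d j = S15.vm h f lam x - S15.vm h f lam y := by
            rw [hdeq, Summable.tsum_sub hdx hdy]; rfl
          rw [e, hveq, sub_self]
        have hzero : ∀ j < k, d j = 0 := by
          intro j hj
          have e : x.1 (j+1) = y.1 (j+1) := hm (j+1) (by omega)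
          simp [hd, e]
        have hshift : ∑' j, d (j + k) = 0 := by
          have e := Summable.sum_add_tsum_nat_add (f := d) k hds
          have hz : ∑ j ∈ Finset.range k, d j = 0 :=
            Finset.sum_eq_zero fun j hj => hzero j (Finset.mem_range.mp hj)
          rw [hz, zero_add, htsum] at e
          exact e
        have hsk : Summable fun j => d (j + k) := (summable_nat_add_iff k).mpr hds
        have hsplit := Summable.tsum_eq_zero_add hsk
        have hdk : d k = - ∑' j, d (j + 1 + k) := by
          have e : d (0 + k) + ∑' j, d (j + 1 + k) = 0 := by rw [← hsplit]; exact hshift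
          have e2 : (0:ℕ) + k = k := Nat.zero_add k
          rw [e2] at e
          exact eq_neg_of_add_eq_zero_left e
        -- upper bound on ‖d k‖
        have hub : ∀ j : ℕ, ‖d j‖ ≤ lam ^ j := by
          intro j
          rw [hd]
          show ‖lam ^ j • (S15.cmap h (x.1 (j+1)) - S15.cmap h (y.1 (j+1)))‖ ≤ lam ^ j
          rw [norm_smul, norm_pow, Real.norm_eq_abs, abs_of_nonneg h0]
          have hc : ‖S15.cmap h (x.1 (j+1)) - S15.cmap h (y.1 (j+1))‖ ≤ 1 := by
            refine (norm_sub_le _ _).trans ?_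
            have c1 := S15.norm_cmap_le hN h hrange (x.1 (j+1))
            have c2 := S15.norm_cmap_le hN h hrange (y.1 (j+1))
            linarith
          calc lam ^ j * ‖_‖ ≤ lam ^ j * 1 :=
              mul_le_mul_of_nonneg_left hc (pow_nonneg h0 j)
            _ = lam ^ j := mul_one _
        have hnorm1 : ‖∑' j, d (j + 1 + k)‖ ≤ lam ^ (k+1) * (1 - lam)⁻¹ := by
          apply tsum_of_norm_bounded ((hasSum_geometric_of_lt_one h0 h1).mul_left (lam ^ (k+1)))
          intro j
          calc ‖d (j + 1 + k)‖ ≤ lam ^ (j + 1 + k) := hub _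
            _ = lam ^ (k+1) * lam ^ j := by rw [← pow_add]; ring_nf
        have hc1 : ‖d k‖ ≤ lam ^ (k+1) * (1 - lam)⁻¹ := by
          rw [hdk, norm_neg]; exact hnorm1
        -- lower bound on ‖d k‖
        have hfeq : f (x.1 (k+1)) = f (y.1 (k+1)) := by
          rw [x.2 k, y.2 k]; exact hm k (by omega)
        have hsep' : δ ≤ ‖h (x.1 (k+1)) - h (y.1 (k+1))‖ := hsep _ _ hne hfeq
        have hlow : lam ^ k * (δ / (2 * N)) ≤ ‖d k‖ := by
          have e3 : d k = lam ^ k • ((2 * (N:ℝ))⁻¹ • (h (x.1 (k+1)) - h (y.1 (k+1)))) := by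
            rw [hd]
            show lam ^ k • (S15.cmap h (x.1 (k+1)) - S15.cmap h (y.1 (k+1))) = _
            rw [S15.cmap, S15.cmap]; module
          rw [e3, norm_smul, norm_smul, norm_pow, Real.norm_eq_abs, abs_of_nonneg h0,
            Real.norm_eq_abs, abs_inv, abs_of_pos (by positivity : (0:ℝ) < 2 * N)]
          have : δ / (2 * N) ≤ (2 * (N:ℝ))⁻¹ * ‖h (x.1 (k+1)) - h (y.1 (k+1))‖ := by
            rw [div_eq_inv_mul]
            exact mul_le_mul_of_nonneg_left hsep' (by positivity)
          exact mul_le_mul_of_nonneg_left this (pow_nonneg h0 k)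
        -- contradiction
        have h4 : (0:ℝ) < 1 - lam := by linarith
        have hinv : (1 - lam)⁻¹ ≤ 2 := by
          have e4 : ((1:ℝ)/2)⁻¹ = 2 := by norm_num
          rw [← e4]
          gcongr
          linarith
        have hd2 : 2 * lam < δ / (2 * (N:ℝ)) := by
          have e5 : δ / (2 * (N:ℝ)) = 2 * (δ / (4 * N)) := by ring
          rw [e5]; linarith
        have hpk : (0:ℝ) < lam ^ k := pow_pos hlam0 k
        have he : lam ^ (k+1) = lam * lam ^ k := by rw [pow_succ]; ring
        have hc2 : lam ^ (k+1) * (1 - lam)⁻¹ ≤ lam ^ (k+1) * 2 :=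
          mul_le_mul_of_nonneg_left hinv (pow_nonneg h0 _)
        have hstep : lam ^ k * (2 * lam) < lam ^ k * (δ / (2 * N)) :=
          mul_lt_mul_of_pos_left hd2 hpk
        nlinarith [hc1, hc2, hlow, hstep, he]
    exact Subtype.ext (funext fun n => Nat.strongRecOn n key)
  refine ⟨ι, hcont, hinj, hequi, ?_, ?_⟩
  · -- range equality
    ext p
    constructor
    · rintro ⟨q, ⟨x, rfl⟩, rfl⟩
      exact ⟨natExtShift f x, (hequi x).symm⟩
    · rintro ⟨x, rfl⟩
      refine ⟨ι (S15.tail f 1 x), ⟨S15.tail f 1 x, rfl⟩, ?_⟩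
      have e : natExtShift f (S15.tail f 1 x) = x := by
        apply Subtype.ext; funext n
        cases n with
        | zero => exact x.2 0
        | succ k => exact congrArg x.1 (Nat.add_comm 1 k)
      rw [hequi (S15.tail f 1 x), e]
  · intro x
    refine ⟨?_, ?_, ?_, ?_⟩
    · -- subsets of {x₀} × D
      intro n
      rw [hG, S15.image_eq hlam0 x n]
      refine Set.prod_mono (subset_refl _) ?_
      intro w hw
      rw [mem_ball] at hw ⊢
      have hbb := S15.bsum_bound hN hrange h0 hlam2.le x n
      have ht : dist w 0 ≤ dist w (S15.bsum h f lam x n) + ‖S15.bsum h f lam x n‖ := by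
        simpa [dist_zero_right] using dist_triangle w (S15.bsum h f lam x n) 0
      linarith
    · -- nested
      intro n
      rw [hG, S15.image_eq hlam0 x (n+1), S15.image_eq hlam0 x n]
      refine Set.prod_mono (subset_refl _) ?_
      intro w hw
      rw [mem_ball] at hw ⊢
      have hbd : dist (S15.bsum h f lam x (n+1)) (S15.bsum h f lam x n) ≤ (1/2) * lam ^ n := by
        have e : S15.bsum h f lam x (n+1)
            = S15.bsum h f lam x n + lam ^ n • S15.cmap h (x.1 (n+1)) := by
          rw [S15.bsum, S15.bsum, Finset.sum_range_succ]
        rw [e, dist_eq_norm, add_sub_cancel_left]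
        exact S15.norm_term_le hN hrange h0 n _
      have ht := dist_triangle w (S15.bsum h f lam x (n+1)) (S15.bsum h f lam x n)
      have hle : lam ^ (n+1) ≤ (1/2) * lam ^ n := by
        rw [pow_succ]
        nlinarith [pow_nonneg h0 n]
      linarith
    · -- fibers are balls
      intro n
      refine ⟨S15.bsum h f lam x n, ?_⟩
      rw [hG, S15.image_eq hlam0 x n]
      exact Set.snd_image_prod (Set.singleton_nonempty _) _
    · -- intersection is the single point
      rw [hG]
      ext ⟨m, w⟩
      constructor
      · intro hall
        rw [Set.mem_iInter] at hall
        have h00 := hall 0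
        rw [S15.image_eq hlam0 x 0] at h00
        have hm0 : m = x.1 0 := h00.1
        have hwv : w = S15.vm h f lam x := by
          have hdl : ∀ n : ℕ, dist w (S15.vm h f lam x) ≤ 2 * lam ^ n := by
            intro n
            have h2 := hall n
            rw [S15.image_eq hlam0 x n] at h2
            have hb2 : dist w (S15.bsum h f lam x n) < lam ^ n := h2.2
            have h3 := hmem x n
            have ht := dist_triangle w (S15.bsum h f lam x n) (S15.vm h f lam x)
            rw [dist_comm (S15.bsum h f lam x n)] at ht
            linarith
          have hlim : Filter.Tendsto (fun n : ℕ => 2 * lam ^ n) Filter.atTop (nhds 0) := by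
            have := tendsto_pow_atTop_nhds_zero_of_lt_one h0 h1
            simpa using this.const_mul 2
          have hle0 : dist w (S15.vm h f lam x) ≤ 0 := ge_of_tendsto' hlim hdl
          exact dist_le_zero.mp hle0
        show (m, w) ∈ ({ι x} : Set _)
        rw [Set.mem_singleton_iff, hι]
        exact Prod.ext hm0 hwv
      · intro hp
        rw [Set.mem_singleton_iff] at hp
        have hm0 : m = x.1 0 := congrArg Prod.fst hp
        have hwv : w = S15.vm h f lam x := congrArg Prod.snd hp
        rw [Set.mem_iInter]
        intro n
        rw [S15.image_eq hlam0 x n]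
        refine Set.mem_prod.mpr ⟨hm0, ?_⟩
        show dist w (S15.bsum h f lam x n) < lam ^ n
        rw [hwv]
        exact hmem x n
end
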